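/- arXiv:2406.10805 — 15 statements merged into one kernel-verified Lean document; each statement's English description precedes it below -/
import Mathlib

section
/- For every μ > 0, the function g is a probability density function: g(x) ≥ 0 for all real x, and the integral of g over the real line equals 1. -/
open MeasureTheory Real Set

noncomputable def g (μ : ℝ) (x : ℝ) : ℝ :=
  if x < -μ then 0
  else if x < μ then Real.exp (-|x|) * (x / (2 * μ) + 1 / 2)
  else Real.exp (-x)

theorem sslud_is_pdf (μ : ℝ) (hμ : 0 < μ) :
    (∀ x : ℝ, 0 ≤ g μ x) ∧ (∫ x : ℝ, g μ x) = 1 := by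
  have hμ' : (2 : ℝ) * μ ≠ 0 := by positivity
  constructor
  · intro x
    unfold g
    split_ifs with h1 h2
    · exact le_rfl
    · apply mul_nonneg (exp_pos _).le
      have : x / (2 * μ) + 1 / 2 = (x + μ) / (2 * μ) := by field_simp
      rw [this]
      exact div_nonneg (by linarith [not_lt.mp h1]) (by positivity)
    · exact (exp_pos _).le
  · set f : ℝ → ℝ := fun x => Real.exp (-|x|) * (x / (2 * μ) + 1 / 2) with hf
    have hfc : Continuous f := by
      apply Continuous.mul
      · exact (continuous_abs.neg).rexp
      · continuity
    -- g = f on Ioc (-μ) μ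
    have hgf : ∀ x ∈ Ioc (-μ) μ, g μ x = f x := by
      intro x hx
      unfold g
      rw [if_neg (by linarith [hx.1])]
      rcases lt_or_ge x μ with h | h
      · rw [if_pos h]
      · have hxμ : x = μ := le_antisymm hx.2 h
        rw [if_neg (not_lt.mpr h), hxμ, hf]
        show Real.exp (-μ) = Real.exp (-|μ|) * (μ / (2 * μ) + 1 / 2)
        rw [abs_of_pos hμ]
        field_simp
        ring
    have hg0 : ∀ x ∈ Iic (-μ), g μ x = 0 := by
      intro x hx
      unfold g
      rcases lt_or_ge x (-μ) with h | h
      · rw [if_pos h]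
      · have hxμ : x = -μ := le_antisymm hx h
        rw [if_neg (not_lt.mpr h), if_pos (by linarith), hxμ]
        have h0 : (-μ) / (2 * μ) + 1 / 2 = 0 := by field_simp; ring
        rw [h0, mul_zero]
    have hgexp : ∀ x ∈ Ioi μ, g μ x = Real.exp (-x) := by
      intro x hx
      simp only [mem_Ioi] at hx
      unfold g
      rw [if_neg (by linarith), if_neg (by linarith)]
    -- Integrability pieces
    have hIoi : IntegrableOn (g μ) (Ioi μ) := by
      apply (IntegrableOn.congr_fun _ (fun x hx => (hgexp x hx).symm) measurableSet_Ioi)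
      simpa using exp_neg_integrableOn_Ioi μ one_pos
    have hIoc : IntegrableOn (g μ) (Ioc (-μ) μ) := by
      apply (IntegrableOn.congr_fun _ (fun x hx => (hgf x hx).symm) measurableSet_Ioc)
      exact (hfc.integrableOn_Icc).mono_set Ioc_subset_Icc_self
    have hIic' : IntegrableOn (g μ) (Iic (-μ)) := by
      apply (IntegrableOn.congr_fun _ (fun x hx => (hg0 x hx).symm) measurableSet_Iic)
      exact integrableOn_zero
    have hIic : IntegrableOn (g μ) (Iic μ) := by
      rw [← Iic_union_Ioc_eq_Iic (by linarith : -μ ≤ μ)]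
      exact hIic'.union hIoc
    rw [← intervalIntegral.integral_Iic_add_Ioi hIic hIoi]
    have h3 : (∫ x in Ioi μ, g μ x) = Real.exp (-μ) := by
      rw [setIntegral_congr_fun measurableSet_Ioi hgexp, integral_exp_neg_Ioi]
    have h12 : (∫ x in Iic μ, g μ x) = ∫ x in (-μ)..μ, f x := by
      rw [← Iic_union_Ioc_eq_Iic (by linarith : -μ ≤ μ),
        setIntegral_union (Iic_disjoint_Ioc le_rfl) measurableSet_Ioc hIic' hIoc,
        setIntegral_congr_fun measurableSet_Iic hg0,
        setIntegral_congr_fun measurableSet_Ioc hgf,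
        intervalIntegral.integral_of_le (by linarith : -μ ≤ μ)]
      simp
    rw [h12, h3]
    have hsplit : (∫ x in (-μ)..μ, f x) = (∫ x in (-μ)..(0:ℝ), f x) + ∫ x in (0:ℝ)..μ, f x := by
      rw [intervalIntegral.integral_add_adjacent_intervals] <;>
        exact hfc.intervalIntegrable _ _
    set F1 : ℝ → ℝ := fun x => Real.exp x * (x / (2 * μ) + (1 / 2 - 1 / (2 * μ))) with hF1def
    have hF1 : ∀ x : ℝ, HasDerivAt F1 (Real.exp x * (x / (2 * μ) + 1 / 2)) x := by
      intro x
      have hd : HasDerivAt (fun y : ℝ => y / (2 * μ) + (1 / 2 - 1 / (2 * μ)))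
          (1 / (2 * μ)) x := ((hasDerivAt_id x).div_const _).add_const _
      have h := (Real.hasDerivAt_exp x).mul hd
      refine h.congr_deriv ?_
      ring
    set F2 : ℝ → ℝ := fun x => -(Real.exp (-x) * (x / (2 * μ) + (1 / 2 + 1 / (2 * μ)))) with hF2def
    have hF2 : ∀ x : ℝ, HasDerivAt F2 (Real.exp (-x) * (x / (2 * μ) + 1 / 2)) x := by
      intro x
      have he : HasDerivAt (fun y : ℝ => Real.exp (-y)) (-Real.exp (-x)) x := by
        simpa using (hasDerivAt_neg x).exp
      have hd : HasDerivAt (fun y : ℝ => y / (2 * μ) + (1 / 2 + 1 / (2 * μ)))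
          (1 / (2 * μ)) x := ((hasDerivAt_id x).div_const _).add_const _
      have h := (he.mul hd).neg
      refine h.congr_deriv ?_
      ring
    have h1 : (∫ x in (-μ)..(0:ℝ), f x) = F1 0 - F1 (-μ) := by
      rw [show (∫ x in (-μ)..(0:ℝ), f x)
          = ∫ x in (-μ)..(0:ℝ), Real.exp x * (x / (2*μ) + 1/2) from ?_]
      · exact intervalIntegral.integral_eq_sub_of_hasDerivAt (fun x _ => hF1 x)
          ((continuous_exp.mul (by fun_prop)).intervalIntegrable _ _)
      · apply intervalIntegral.integral_congr
        intro x hx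
        rw [uIcc_of_le (by linarith : -μ ≤ (0:ℝ))] at hx
        rw [hf]
        show Real.exp (-|x|) * (x / (2 * μ) + 1 / 2) = _
        rw [abs_of_nonpos hx.2, neg_neg]
    have h2 : (∫ x in (0:ℝ)..μ, f x) = F2 μ - F2 0 := by
      rw [show (∫ x in (0:ℝ)..μ, f x)
          = ∫ x in (0:ℝ)..μ, Real.exp (-x) * (x / (2*μ) + 1/2) from ?_]
      · exact intervalIntegral.integral_eq_sub_of_hasDerivAt (fun x _ => hF2 x)
          (((continuous_id.neg.rexp).mul (by fun_prop)).intervalIntegrable _ _)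
      · apply intervalIntegral.integral_congr
        intro x hx
        rw [uIcc_of_le hμ.le] at hx
        rw [hf]
        show Real.exp (-|x|) * (x / (2 * μ) + 1 / 2) = _
        rw [abs_of_nonneg hx.1]
    rw [hsplit, h1, h2, hF1def, hF2def]
    simp only
    field_simp
    ring
    simp
end

section
/- For every μ > 0 and every real x with -μ ≤ x < 0, the cumulative distribution function satisfies G(x) = (e^{x}/(2μ))(x + μ - 1) + e^{-μ}/(2μ). -/
open MeasureTheory Real

noncomputable def G (μ : ℝ) (x : ℝ) : ℝ := ∫ t in Set.Iic x, g μ t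

theorem sslud_cdf_neg (μ : ℝ) (hμ : 0 < μ) (x : ℝ) (h1 : -μ ≤ x) (h2 : x < 0) :
    G μ x = Real.exp x / (2 * μ) * (x + μ - 1) + Real.exp (-μ) / (2 * μ) := by
  have hμ0 : (2 * μ) ≠ 0 := by positivity
  have hcont : Continuous fun t : ℝ => Real.exp t * (t / (2 * μ) + 1 / 2) := by
    continuity
  have hg : ∀ t ∈ Set.Ioc (-μ) x, g μ t = Real.exp t * (t / (2 * μ) + 1 / 2) := by
    intro t ht
    have h1t : ¬ t < -μ := not_lt.2 ht.1.le
    have h2t : t < μ := lt_of_le_of_lt ht.2 (h2.trans hμ)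
    have habs : |t| = -t := abs_of_nonpos (ht.2.trans h2.le)
    simp [g, h1t, h2t, habs]
  have h0 : ∫ t in Set.Iic (-μ), g μ t = 0 := by
    rw [integral_Iic_eq_integral_Iio,
      show (∫ t in Set.Iio (-μ), g μ t) = ∫ _ in Set.Iio (-μ), (0:ℝ) from
        setIntegral_congr_fun measurableSet_Iio fun t ht => if_pos ht]
    simp
  have hne : ∀ᵐ t : ℝ, t ≠ -μ := by
    simp [ae_iff, Set.setOf_eq_eq_singleton]
  have hint1 : IntegrableOn (g μ) (Set.Iic (-μ)) := by
    refine (integrable_zero _ _ _).congr ?_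
    rw [Filter.EventuallyEq, ae_restrict_iff' measurableSet_Iic]
    filter_upwards [hne] with t ht hle
    exact (if_pos (lt_of_le_of_ne hle ht)).symm
  have hint2 : IntegrableOn (g μ) (Set.Ioc (-μ) x) :=
    (hcont.integrableOn_Ioc).congr_fun (fun t ht => (hg t ht).symm) measurableSet_Ioc
  have hF : ∀ t : ℝ, HasDerivAt (fun t => Real.exp t * ((t - 1) / (2 * μ) + 1 / 2))
      (Real.exp t * (t / (2 * μ) + 1 / 2)) t := by
    intro t
    have hd : HasDerivAt (fun t : ℝ => (t - 1) / (2 * μ) + 1 / 2) (1 / (2 * μ)) t := by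
      simpa using (((hasDerivAt_id t).sub_const 1).div_const (2 * μ)).add_const (1 / 2)
    have := (Real.hasDerivAt_exp t).fun_mul hd
    refine this.congr_deriv ?_
    ring
  have key : ∫ t in Set.Ioc (-μ) x, g μ t =
      Real.exp x * ((x - 1) / (2 * μ) + 1 / 2) -
        Real.exp (-μ) * ((-μ - 1) / (2 * μ) + 1 / 2) := by
    rw [setIntegral_congr_fun measurableSet_Ioc hg,
      ← intervalIntegral.integral_of_le h1]
    exact intervalIntegral.integral_eq_sub_of_hasDerivAt (fun t _ => hF t)
      (hcont.intervalIntegrable _ _)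
  have hunion : Set.Iic (-μ) ∪ Set.Ioc (-μ) x = Set.Iic x := Set.Iic_union_Ioc_eq_Iic h1
  have hsplit : G μ x = (∫ t in Set.Iic (-μ), g μ t) + ∫ t in Set.Ioc (-μ) x, g μ t := by
    rw [G, ← hunion, setIntegral_union (Set.Iic_disjoint_Ioc le_rfl) measurableSet_Ioc hint1 hint2]
  rw [hsplit, h0, key]
  field_simp
  ring
end

section
/- For every μ > 0 and every real x with 0 ≤ x < μ, the cumulative distribution function satisfies G(x) = 1 + e^{-μ}/(2μ) - (e^{-x}/(2μ))(x + μ + 1). -/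
set_option maxHeartbeats 1000000

open MeasureTheory Real

theorem sslud_cdf_mid (μ : ℝ) (hμ : 0 < μ) (x : ℝ) (h1 : 0 ≤ x) (h2 : x < μ) :
    G μ x = 1 + Real.exp (-μ) / (2 * μ) - Real.exp (-x) / (2 * μ) * (x + μ + 1) := by
  have hμx : -μ ≤ x := by linarith
  set h : ℝ → ℝ := fun t => Real.exp (-|t|) * (t / (2 * μ) + 1 / 2) with hh
  have hcont : Continuous h := by
    apply Continuous.mul
    · exact Real.continuous_exp.comp (continuous_abs.neg)
    · continuity
  -- g = 0 on Iic (-μ)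
  have hzero : ∀ t ∈ Set.Iic (-μ), g μ t = 0 := by
    intro t ht
    simp only [Set.mem_Iic] at ht
    unfold g
    rcases lt_or_eq_of_le ht with h | h
    · rw [if_pos h]
    · rw [if_neg (by simp [h]), if_pos (by linarith), h, abs_neg, abs_of_pos hμ]
      field_simp
      ring
  -- g = h on Ioc (-μ) x
  have hgh : ∀ t ∈ Set.Ioc (-μ) x, g μ t = h t := by
    intro t ht
    obtain ⟨ht1, ht2⟩ := ht
    unfold g
    rw [if_neg (by linarith), if_pos (by linarith)]
  have hsplit : (Set.Iic x : Set ℝ) = Set.Iic (-μ) ∪ Set.Ioc (-μ) x :=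
    (Set.Iic_union_Ioc_eq_Iic hμx).symm
  have hint1 : IntegrableOn (g μ) (Set.Iic (-μ)) := by
    apply (integrableOn_zero (ε' := ℝ)).congr_fun (fun t ht => (hzero t ht).symm) measurableSet_Iic
  have hint2 : IntegrableOn (g μ) (Set.Ioc (-μ) x) := by
    apply (hcont.integrableOn_Ioc).congr_fun (fun t ht => (hgh t ht).symm) measurableSet_Ioc
  have step1 : G μ x = ∫ t in Set.Ioc (-μ) x, g μ t := by
    unfold G
    rw [hsplit, setIntegral_union (Set.Iic_disjoint_Ioc le_rfl) measurableSet_Ioc hint1 hint2,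
      setIntegral_eq_zero_of_forall_eq_zero hzero, zero_add]
  have step2 : ∫ t in Set.Ioc (-μ) x, g μ t = ∫ t in (-μ)..x, h t := by
    rw [intervalIntegral.integral_of_le hμx]
    exact setIntegral_congr_fun measurableSet_Ioc hgh
  have hii : ∀ a b : ℝ, IntervalIntegrable h volume a b := fun a b =>
    hcont.intervalIntegrable a b
  have step3 : ∫ t in (-μ)..x, h t = (∫ t in (-μ)..(0:ℝ), h t) + ∫ t in (0:ℝ)..x, h t :=
    (intervalIntegral.integral_add_adjacent_intervals (hii _ _) (hii _ _)).symm
  -- first piece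
  have e1 : ∫ t in (-μ)..(0:ℝ), h t = ∫ t in (-μ)..(0:ℝ), Real.exp t * (t / (2 * μ) + 1 / 2) := by
    apply intervalIntegral.integral_congr
    intro t ht
    rw [Set.uIcc_of_le (by linarith : -μ ≤ (0:ℝ))] at ht
    have : |t| = -t := abs_of_nonpos ht.2
    simp [hh, this]
  have e2 : ∫ t in (0:ℝ)..x, h t = ∫ t in (0:ℝ)..x, Real.exp (-t) * (t / (2 * μ) + 1 / 2) := by
    apply intervalIntegral.integral_congr
    intro t ht
    rw [Set.uIcc_of_le h1] at ht
    have : |t| = t := abs_of_nonneg ht.1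
    simp [hh, this]
  have d1 : ∀ t : ℝ, HasDerivAt (fun t => Real.exp t * (t / (2 * μ) + 1 / 2 - 1 / (2 * μ)))
      (Real.exp t * (t / (2 * μ) + 1 / 2)) t := by
    intro t
    have hl : HasDerivAt (fun t : ℝ => t / (2 * μ) + 1 / 2 - 1 / (2 * μ)) (1 / (2 * μ)) t := by
      simpa using (((hasDerivAt_id t).div_const (2 * μ)).add_const (1/2)).sub_const (1 / (2 * μ))
    have : HasDerivAt (fun t => Real.exp t * (t / (2 * μ) + 1 / 2 - 1 / (2 * μ))) _ t :=
      (Real.hasDerivAt_exp t).mul hl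
    convert this using 1
    ring
  have d2 : ∀ t : ℝ, HasDerivAt (fun t => -(Real.exp (-t) * (t / (2 * μ) + 1 / 2 + 1 / (2 * μ))))
      (Real.exp (-t) * (t / (2 * μ) + 1 / 2)) t := by
    intro t
    have he : HasDerivAt (fun t : ℝ => Real.exp (-t)) (-Real.exp (-t)) t := by
      have h' : HasDerivAt (fun t : ℝ => Real.exp (-t)) _ t := (Real.hasDerivAt_exp (-t)).comp t (hasDerivAt_neg t)
      simpa using h'
    have hl : HasDerivAt (fun t : ℝ => t / (2 * μ) + 1 / 2 + 1 / (2 * μ)) (1 / (2 * μ)) t := by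
      simpa using (((hasDerivAt_id t).div_const (2 * μ)).add_const (1/2)).add_const (1 / (2 * μ))
    have : HasDerivAt (fun t => -(Real.exp (-t) * (t / (2 * μ) + 1 / 2 + 1 / (2 * μ)))) _ t :=
      (he.mul hl).neg
    convert this using 1
    ring
  have c1 : Continuous (fun t : ℝ => Real.exp t * (t / (2 * μ) + 1 / 2)) := by continuity
  have c2 : Continuous (fun t : ℝ => Real.exp (-t) * (t / (2 * μ) + 1 / 2)) := by continuity
  have v1 : ∫ t in (-μ)..(0:ℝ), Real.exp t * (t / (2 * μ) + 1 / 2)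
      = (Real.exp 0 * (0 / (2 * μ) + 1 / 2 - 1 / (2 * μ)))
        - Real.exp (-μ) * ((-μ) / (2 * μ) + 1 / 2 - 1 / (2 * μ)) := by
    exact intervalIntegral.integral_eq_sub_of_hasDerivAt (fun t _ => d1 t)
      (c1.intervalIntegrable _ _)
  have v2 : ∫ t in (0:ℝ)..x, Real.exp (-t) * (t / (2 * μ) + 1 / 2)
      = -(Real.exp (-x) * (x / (2 * μ) + 1 / 2 + 1 / (2 * μ)))
        - -(Real.exp (-0) * (0 / (2 * μ) + 1 / 2 + 1 / (2 * μ))) := by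
    exact intervalIntegral.integral_eq_sub_of_hasDerivAt (fun t _ => d2 t)
      (c2.intervalIntegrable _ _)
  rw [step1, step2, step3, e1, e2, v1, v2]
  have hμ' : (2 : ℝ) * μ ≠ 0 := by positivity
  simp only [Real.exp_zero, neg_zero]
  field_simp
  ring
end

section
/- For every μ > 0 and every real x with x ≥ μ, the cumulative distribution function satisfies G(x) = 1 - e^{-x}. -/
open MeasureTheory Real

theorem sslud_cdf_tail (μ : ℝ) (hμ : 0 < μ) (x : ℝ) (h : μ ≤ x) :
    G μ x = 1 - Real.exp (-x) := by
  have hμ' : μ ≠ 0 := hμ.ne'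
  have hneg : -μ ≤ (0:ℝ) := by linarith
  have h0μ : (0:ℝ) ≤ μ := hμ.le
  -- pointwise descriptions
  have e1 : Set.EqOn (g μ) (fun _ => (0:ℝ)) (Set.Iic (-μ)) := by
    intro t ht
    rcases lt_or_eq_of_le (Set.mem_Iic.mp ht) with h' | h'
    · simp [g, h']
    · subst h'
      unfold g
      rw [if_neg (lt_irrefl _), if_pos (by linarith)]
      have : -μ / (2 * μ) + 1 / 2 = 0 := by field_simp; ring
      rw [this, mul_zero]
  have e2 : Set.EqOn (g μ) (fun t => Real.exp t * (t / (2 * μ) + 1 / 2))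
      (Set.Ioc (-μ) 0) := by
    intro t ht
    unfold g
    rw [if_neg (not_lt.2 ht.1.le), if_pos (lt_of_le_of_lt ht.2 hμ),
      abs_of_nonpos ht.2, neg_neg]
  have e3 : Set.EqOn (g μ) (fun t => Real.exp (-t) * (t / (2 * μ) + 1 / 2))
      (Set.Ioc 0 μ) := by
    intro t ht
    have hne : ¬ t < -μ := by linarith [ht.1]
    show g μ t = Real.exp (-t) * (t / (2 * μ) + 1 / 2)
    rcases lt_or_eq_of_le ht.2 with h' | h'
    · unfold g; rw [if_neg hne, if_pos h', abs_of_nonneg ht.1.le]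
    · have h1 : t / (2 * μ) + 1 / 2 = 1 := by rw [h']; field_simp; ring
      unfold g
      rw [if_neg hne, if_neg (by rw [h']; exact lt_irrefl _), h1, mul_one]
  have e4 : Set.EqOn (g μ) (fun t => Real.exp (-t)) (Set.Ioc μ x) := by
    intro t ht
    unfold g
    rw [if_neg (by linarith [ht.1] : ¬ t < -μ), if_neg (not_lt.2 ht.1.le)]
  -- integrability
  have i1 : IntegrableOn (g μ) (Set.Iic (-μ)) := by
    exact (integrableOn_zero).congr_fun e1.symm measurableSet_Iic
  have c2 : Continuous fun t : ℝ => Real.exp t * (t / (2 * μ) + 1 / 2) := by fun_prop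
  have c3 : Continuous fun t : ℝ => Real.exp (-t) * (t / (2 * μ) + 1 / 2) := by fun_prop
  have c4 : Continuous fun t : ℝ => Real.exp (-t) := by fun_prop
  have i2 : IntegrableOn (g μ) (Set.Ioc (-μ) 0) :=
    (c2.integrableOn_Ioc).congr_fun e2.symm measurableSet_Ioc
  have i3 : IntegrableOn (g μ) (Set.Ioc 0 μ) :=
    (c3.integrableOn_Ioc).congr_fun e3.symm measurableSet_Ioc
  have i4 : IntegrableOn (g μ) (Set.Ioc μ x) :=
    (c4.integrableOn_Ioc).congr_fun e4.symm measurableSet_Ioc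
  -- splitting
  have s1 : ∫ t in Set.Iic 0, g μ t
      = (∫ t in Set.Iic (-μ), g μ t) + ∫ t in Set.Ioc (-μ) 0, g μ t := by
    rw [← Set.Iic_union_Ioc_eq_Iic hneg,
      setIntegral_union (Set.Iic_disjoint_Ioc le_rfl) measurableSet_Ioc i1 i2]
  have iA : IntegrableOn (g μ) (Set.Iic 0) := by
    rw [← Set.Iic_union_Ioc_eq_Iic hneg]; exact i1.union i2
  have s2 : ∫ t in Set.Iic μ, g μ t
      = (∫ t in Set.Iic 0, g μ t) + ∫ t in Set.Ioc 0 μ, g μ t := by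
    rw [← Set.Iic_union_Ioc_eq_Iic h0μ,
      setIntegral_union (Set.Iic_disjoint_Ioc le_rfl) measurableSet_Ioc iA i3]
  have iB : IntegrableOn (g μ) (Set.Iic μ) := by
    rw [← Set.Iic_union_Ioc_eq_Iic h0μ]; exact iA.union i3
  have s3 : ∫ t in Set.Iic x, g μ t
      = (∫ t in Set.Iic μ, g μ t) + ∫ t in Set.Ioc μ x, g μ t := by
    rw [← Set.Iic_union_Ioc_eq_Iic h,
      setIntegral_union (Set.Iic_disjoint_Ioc le_rfl) measurableSet_Ioc iB i4]
  -- compute each piece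
  have v1 : ∫ t in Set.Iic (-μ), g μ t = 0 := by
    rw [setIntegral_congr_fun measurableSet_Iic e1]; simp
  have d2 : ∀ t : ℝ, HasDerivAt (fun t => Real.exp t * (t / (2 * μ) + (1 / 2 - 1 / (2 * μ))))
      (Real.exp t * (t / (2 * μ) + 1 / 2)) t := by
    intro t
    have hd := (Real.hasDerivAt_exp t).mul
      (((hasDerivAt_id t).div_const (2 * μ)).add_const (1 / 2 - 1 / (2 * μ)))
    have heq : Real.exp t * (id t / (2 * μ) + (1 / 2 - 1 / (2 * μ)))
        + Real.exp t * (1 / (2 * μ)) = Real.exp t * (t / (2 * μ) + 1 / 2) := by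
      simp only [id_eq]; ring
    exact heq ▸ hd
  have hexp : ∀ t : ℝ, HasDerivAt (fun t => Real.exp (-t)) (-Real.exp (-t)) t := by
    intro t
    simpa [Function.comp_def] using (Real.hasDerivAt_exp (-t)).comp t (hasDerivAt_neg t)
  have d3 : ∀ t : ℝ, HasDerivAt (fun t => -(Real.exp (-t) * (t / (2 * μ) + (1 / 2 + 1 / (2 * μ)))))
      (Real.exp (-t) * (t / (2 * μ) + 1 / 2)) t := by
    intro t
    have hd := ((hexp t).mul
      (((hasDerivAt_id t).div_const (2 * μ)).add_const (1 / 2 + 1 / (2 * μ)))).neg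
    have heq : -((-Real.exp (-t)) * (id t / (2 * μ) + (1 / 2 + 1 / (2 * μ)))
        + Real.exp (-t) * (1 / (2 * μ))) = Real.exp (-t) * (t / (2 * μ) + 1 / 2) := by
      simp only [id_eq]; ring
    exact heq ▸ hd
  have d4 : ∀ t : ℝ, HasDerivAt (fun t => -Real.exp (-t)) (Real.exp (-t)) t := by
    intro t
    have := (hexp t).neg; rwa [neg_neg] at this
  have v2 : ∫ t in Set.Ioc (-μ) 0, g μ t
      = (1 / 2 - 1 / (2 * μ)) + Real.exp (-μ) / (2 * μ) := by
    rw [setIntegral_congr_fun measurableSet_Ioc e2, ← intervalIntegral.integral_of_le hneg,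
      intervalIntegral.integral_eq_sub_of_hasDerivAt (fun t _ => d2 t)
        (c2.intervalIntegrable _ _)]
    rw [Real.exp_zero]
    field_simp
    ring
  have v3 : ∫ t in Set.Ioc 0 μ, g μ t
      = (1 / 2 + 1 / (2 * μ)) - Real.exp (-μ) * (1 + 1 / (2 * μ)) := by
    rw [setIntegral_congr_fun measurableSet_Ioc e3, ← intervalIntegral.integral_of_le h0μ,
      intervalIntegral.integral_eq_sub_of_hasDerivAt (fun t _ => d3 t)
        (c3.intervalIntegrable _ _)]
    rw [neg_zero, Real.exp_zero]
    field_simp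
    ring
  have v4 : ∫ t in Set.Ioc μ x, g μ t = Real.exp (-μ) - Real.exp (-x) := by
    rw [setIntegral_congr_fun measurableSet_Ioc e4, ← intervalIntegral.integral_of_le h,
      intervalIntegral.integral_eq_sub_of_hasDerivAt (fun t _ => d4 t)
        (c4.intervalIntegrable _ _)]
    ring
  have h2μ : (2 * μ) ≠ 0 := by positivity
  unfold G
  rw [s3, s2, s1, v1, v2, v3, v4]
  field_simp
  ring
end

section
/- For every μ > 0 and every real t with t < 1 and t ≠ -1, the moment generating function of SSLUD(μ) satisfies ∫_{ℝ} e^{t x} g(x) dx = (1/(2μ)) [ (-1 + e^{-μ(1+t)})/(1+t)^2 + (1 - e^{-μ(1-t)})/(1-t)^2 ] + 1/(1 - t^2). -/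
open MeasureTheory Real

lemma contF (c μ : ℝ) : Continuous fun x : ℝ => Real.exp (c * x) * (x / (2 * μ) + 1 / 2) :=
  (Real.continuous_exp.comp (continuous_const.mul continuous_id)).mul
    ((continuous_id.div_const _).add continuous_const)

lemma hasDerivAt_F (c μ : ℝ) (hc : c ≠ 0) (hμ : μ ≠ 0) (x : ℝ) :
    HasDerivAt (fun y => Real.exp (c * y) * ((y / (2 * μ) + 1 / 2) / c - 1 / (2 * μ * c ^ 2)))
      (Real.exp (c * x) * (x / (2 * μ) + 1 / 2)) x := by
  have h1 : HasDerivAt (fun y => Real.exp (c * y)) (Real.exp (c * x) * c) x :=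
    (Real.hasDerivAt_exp (c * x)).comp x (by simpa using (hasDerivAt_id x).const_mul c)
  have h2 : HasDerivAt (fun y : ℝ => (y / (2 * μ) + 1 / 2) / c - 1 / (2 * μ * c ^ 2))
      (1 / (2 * μ) / c) x := by
    have := (((hasDerivAt_id x).div_const (2 * μ)).add_const (1 / 2)).div_const c
    exact this.sub_const (1 / (2 * μ * c ^ 2))
  have h := h1.mul h2
  refine h.congr_deriv ?_
  field_simp
  ring

theorem sslud_mgf (μ : ℝ) (hμ : 0 < μ) (t : ℝ) (ht : t < 1) (ht' : t ≠ -1) :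
    (∫ x : ℝ, Real.exp (t * x) * g μ x) =
      (1 / (2 * μ)) * ((-1 + Real.exp (-μ * (1 + t))) / (1 + t) ^ 2
        + (1 - Real.exp (-μ * (1 - t))) / (1 - t) ^ 2) + 1 / (1 - t ^ 2) := by
  have hμ' : μ ≠ 0 := ne_of_gt hμ
  have ha : (1 : ℝ) + t ≠ 0 := fun h => ht' (by linarith)
  have hb : t - 1 ≠ 0 := fun h => absurd ht (by simp [show t = 1 by linarith])
  set f : ℝ → ℝ := fun x => Real.exp (t * x) * g μ x with hf
  -- pointwise descriptions
  have h1 : ∀ x ∈ Set.Iic (-μ), f x = 0 := by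
    intro x hx
    simp only [Set.mem_Iic] at hx
    have hg : g μ x = 0 := by
      unfold g
      rcases lt_or_eq_of_le hx with h | h
      · rw [if_pos h]
      · rw [if_neg (by rw [h]; exact lt_irrefl _), if_pos (by rw [h]; linarith)]
        rw [h]
        have hz : -μ / (2 * μ) + 1 / 2 = 0 := by field_simp; ring
        rw [hz, mul_zero]
    simp [hf, hg]
  have h2 : ∀ x ∈ Set.Ioc (-μ) 0, f x = Real.exp ((1 + t) * x) * (x / (2 * μ) + 1 / 2) := by
    intro x hx
    obtain ⟨hx1, hx2⟩ := hx
    have hne : ¬ x < -μ := not_lt.2 hx1.le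
    have hlt : x < μ := by linarith
    simp only [hf, g, if_neg hne, if_pos hlt, abs_of_nonpos hx2, neg_neg]
    rw [show (1 + t) * x = t * x + x by ring, Real.exp_add]
    ring
  have h3 : ∀ x ∈ Set.Ioc 0 μ, f x = Real.exp ((t - 1) * x) * (x / (2 * μ) + 1 / 2) := by
    intro x hx
    obtain ⟨hx1, hx2⟩ := hx
    have hne : ¬ x < -μ := not_lt.2 (by linarith)
    by_cases hlt : x < μ
    · simp only [hf, g, if_neg hne, if_pos hlt, abs_of_pos hx1]
      rw [show (t - 1) * x = t * x + -x by ring, Real.exp_add]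
      ring
    · have hx' : x = μ := le_antisymm hx2 (not_lt.1 hlt)
      simp only [hf, g, if_neg hne, if_neg hlt]
      rw [hx', show μ / (2 * μ) + 1 / 2 = 1 by field_simp; ring,
        show (t - 1) * μ = t * μ + -μ by ring, Real.exp_add]
      ring
  have h4 : ∀ x ∈ Set.Ioi μ, f x = Real.exp ((t - 1) * x) := by
    intro x hx
    have hx1 : μ < x := hx
    have hne : ¬ x < -μ := not_lt.2 (by linarith)
    have hne2 : ¬ x < μ := not_lt.2 hx1.le
    simp only [hf, g, if_neg hne, if_neg hne2]
    rw [show (t - 1) * x = t * x + -x by ring, Real.exp_add]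
  -- integrability
  have int1 : IntegrableOn f (Set.Iic (-μ)) :=
    (integrableOn_zero).congr_fun (fun x hx => (h1 x hx).symm) measurableSet_Iic
  have int2 : IntegrableOn f (Set.Ioc (-μ) 0) :=
    ((contF (1 + t) μ).integrableOn_Ioc).congr_fun (fun x hx => (h2 x hx).symm) measurableSet_Ioc
  have int3 : IntegrableOn f (Set.Ioc 0 μ) :=
    ((contF (t - 1) μ).integrableOn_Ioc).congr_fun (fun x hx => (h3 x hx).symm) measurableSet_Ioc
  have int4' : IntegrableOn (fun x => Real.exp ((t - 1) * x)) (Set.Ioi μ) := by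
    have h := exp_neg_integrableOn_Ioi μ (show (0:ℝ) < 1 - t by linarith)
    refine h.congr_fun (fun x _ => ?_) measurableSet_Ioi
    congr 1; ring
  have int4 : IntegrableOn f (Set.Ioi μ) :=
    int4'.congr_fun (fun x hx => (h4 x hx).symm) measurableSet_Ioi
  -- splits
  have intIoi0 : IntegrableOn f (Set.Ioi (0:ℝ)) := by
    rw [← Set.Ioc_union_Ioi_eq_Ioi (le_of_lt hμ)]
    exact int3.union int4
  have intIoim : IntegrableOn f (Set.Ioi (-μ)) := by
    rw [← Set.Ioc_union_Ioi_eq_Ioi (show -μ ≤ (0:ℝ) by linarith)]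
    exact int2.union intIoi0
  have split0 : (∫ x : ℝ, f x) = (∫ x in Set.Iic (-μ), f x) + ∫ x in Set.Ioi (-μ), f x :=
    (intervalIntegral.integral_Iic_add_Ioi int1 intIoim).symm
  have split1 : (∫ x in Set.Ioi (-μ), f x) =
      (∫ x in Set.Ioc (-μ) 0, f x) + ∫ x in Set.Ioi (0:ℝ), f x := by
    rw [← Set.Ioc_union_Ioi_eq_Ioi (show -μ ≤ (0:ℝ) by linarith)]
    exact setIntegral_union Set.Ioc_disjoint_Ioi_same measurableSet_Ioi int2 intIoi0
  have split2 : (∫ x in Set.Ioi (0:ℝ), f x) =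
      (∫ x in Set.Ioc 0 μ, f x) + ∫ x in Set.Ioi μ, f x := by
    rw [← Set.Ioc_union_Ioi_eq_Ioi (le_of_lt hμ)]
    exact setIntegral_union Set.Ioc_disjoint_Ioi_same measurableSet_Ioi int3 int4
  -- values of each piece
  have v1 : (∫ x in Set.Iic (-μ), f x) = 0 := by
    rw [setIntegral_congr_fun measurableSet_Iic h1, integral_zero]
  have key : ∀ c : ℝ, c ≠ 0 → ∀ p q : ℝ, p ≤ q →
      (∫ x in Set.Ioc p q, Real.exp (c * x) * (x / (2 * μ) + 1 / 2)) =
        (Real.exp (c * q) * ((q / (2 * μ) + 1 / 2) / c - 1 / (2 * μ * c ^ 2)))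
        - (Real.exp (c * p) * ((p / (2 * μ) + 1 / 2) / c - 1 / (2 * μ * c ^ 2))) := by
    intro c hc p q hpq
    rw [← intervalIntegral.integral_of_le hpq]
    exact intervalIntegral.integral_eq_sub_of_hasDerivAt
      (fun x _ => hasDerivAt_F c μ hc hμ' x) ((contF c μ).intervalIntegrable p q)
  have v2 : (∫ x in Set.Ioc (-μ) 0, f x) =
      (Real.exp ((1 + t) * 0) * ((0 / (2 * μ) + 1 / 2) / (1 + t) - 1 / (2 * μ * (1 + t) ^ 2)))
      - (Real.exp ((1 + t) * (-μ)) * (((-μ) / (2 * μ) + 1 / 2) / (1 + t)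
          - 1 / (2 * μ * (1 + t) ^ 2))) := by
    rw [setIntegral_congr_fun measurableSet_Ioc h2]
    exact key (1 + t) ha (-μ) 0 (by linarith)
  have v3 : (∫ x in Set.Ioc 0 μ, f x) =
      (Real.exp ((t - 1) * μ) * ((μ / (2 * μ) + 1 / 2) / (t - 1) - 1 / (2 * μ * (t - 1) ^ 2)))
      - (Real.exp ((t - 1) * 0) * ((0 / (2 * μ) + 1 / 2) / (t - 1)
          - 1 / (2 * μ * (t - 1) ^ 2))) := by
    rw [setIntegral_congr_fun measurableSet_Ioc h3]
    exact key (t - 1) hb 0 μ (le_of_lt hμ)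
  have v4 : (∫ x in Set.Ioi μ, f x) = 0 - Real.exp ((t - 1) * μ) / (t - 1) := by
    rw [setIntegral_congr_fun measurableSet_Ioi h4]
    refine integral_Ioi_of_hasDerivAt_of_tendsto' (f := fun x => Real.exp ((t - 1) * x) / (t - 1))
      (fun x _ => ?_) int4' ?_
    · have hd : HasDerivAt (fun y => Real.exp ((t - 1) * y)) (Real.exp ((t - 1) * x) * (t - 1)) x :=
        (Real.hasDerivAt_exp ((t - 1) * x)).comp x
          (by simpa using (hasDerivAt_id x).const_mul (t - 1))
      have := hd.div_const (t - 1)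
      simpa [mul_div_assoc, mul_div_cancel_right₀ _ hb] using this
    · have htend : Filter.Tendsto (fun x : ℝ => (t - 1) * x) Filter.atTop Filter.atBot :=
        Filter.Tendsto.const_mul_atTop_of_neg (by linarith) Filter.tendsto_id
      have := (Real.tendsto_exp_atBot.comp htend).div_const (t - 1)
      simpa using this
  -- put together
  rw [split0, split1, split2, v1, v2, v3, v4]
  rw [show (1 + t) * (-μ) = -μ * (1 + t) by ring, show (t - 1) * μ = -μ * (1 - t) by ring]
  have h1t : (1 : ℝ) - t ≠ 0 := fun h => hb (by linarith)
  have h1t2 : (1 : ℝ) - t ^ 2 ≠ 0 := by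
    have h12 : (1 : ℝ) - t ^ 2 = (1 - t) * (1 + t) := by ring
    rw [h12]; exact mul_ne_zero h1t ha
  simp only [mul_zero, Real.exp_zero, zero_div]
  field_simp
  ring
end

section
/- For every μ > 0, the first raw moment of SSLUD(μ) satisfies ∫_{ℝ} x · g(x) dx = 2/μ - (1 + 2/μ) e^{-μ}. -/
open MeasureTheory Real Set Filter Topology

theorem sslud_first_moment (μ : ℝ) (hμ : 0 < μ) :
    (∫ x : ℝ, x * g μ x) = 2 / μ - (1 + 2 / μ) * Real.exp (-μ) := by
  set f : ℝ → ℝ := fun x => x * g μ x with hf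
  -- f vanishes on Iic (-μ)
  have hind : f = (Ioi (-μ)).indicator f := by
    ext x
    by_cases hx : x ∈ Ioi (-μ)
    · rw [indicator_of_mem hx]
    · rw [indicator_of_notMem hx]
      simp only [mem_Ioi, not_lt] at hx
      rcases lt_or_eq_of_le hx with h | h
      · simp [hf, g, h]
      · subst h
        have h1 : ¬ (-μ : ℝ) < -μ := lt_irrefl _
        have h2 : (-μ : ℝ) < μ := by linarith
        have h3 : -μ / (2 * μ) + 1 / 2 = 0 := by field_simp; ring
        have hg : g μ (-μ) = 0 := by
          simp only [g, if_neg h1, if_pos h2, h3, mul_zero]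
        simp [hf, hg]
  -- on Ioc (-μ) μ, f agrees with a continuous function
  have hmid : ∀ x ∈ Ioc (-μ) μ, f x = x * (Real.exp (-|x|) * (x / (2 * μ) + 1 / 2)) := by
    intro x hx
    rcases lt_or_eq_of_le hx.2 with h | h
    · simp [hf, g, not_lt.2 hx.1.le, h]
    · rw [h]
      have hh : μ / (2 * μ) + 1 / 2 = 1 := by field_simp; ring
      have hg : g μ μ = Real.exp (-μ) := by
        simp only [g, if_neg (not_lt.2 (by linarith : -μ ≤ μ)), if_neg (lt_irrefl μ)]
      show μ * g μ μ = μ * (Real.exp (-|μ|) * (μ / (2 * μ) + 1 / 2))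
      rw [hg, abs_of_pos hμ, hh, mul_one]
  -- on Ioi μ, f x = x * exp (-x)
  have hright : ∀ x ∈ Ioi μ, f x = x * Real.exp (-x) := by
    intro x hx
    have h1 : ¬ x < -μ := by simp only [mem_Ioi] at hx; push_neg; linarith
    have h2 : ¬ x < μ := not_lt.2 (le_of_lt hx)
    simp [hf, g, h1, h2]
  -- integral over Ioi μ
  have hF : ∀ x : ℝ, HasDerivAt (fun y => -(y + 1) * Real.exp (-y)) (x * Real.exp (-x)) x := by
    intro x
    have h1 : HasDerivAt (fun y : ℝ => Real.exp (-y)) (-Real.exp (-x)) x := by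
      simpa [Function.comp_def] using (Real.hasDerivAt_exp (-x)).comp x ((hasDerivAt_id x).neg)
    have h2 : HasDerivAt (fun y : ℝ => -(y + 1)) (-1 : ℝ) x := by
      exact (((hasDerivAt_id x).add_const 1).neg)
    have := h2.mul h1
    refine this.congr_deriv ?_
    ring
  have htend : Tendsto (fun y : ℝ => -(y + 1) * Real.exp (-y)) atTop (𝓝 0) := by
    have h1 := Real.tendsto_pow_mul_exp_neg_atTop_nhds_zero 1
    have h2 := Real.tendsto_exp_neg_atTop_nhds_zero
    have := (h1.add h2).neg
    simp only [pow_one, neg_zero, add_zero] at this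
    convert this using 2 with x
    ring
  have hpos : ∀ x ∈ Ioi μ, 0 ≤ x * Real.exp (-x) := fun x hx =>
    mul_nonneg (le_of_lt (lt_trans hμ hx)) (Real.exp_pos _).le
  have hIoiInt : IntegrableOn (fun x => x * Real.exp (-x)) (Ioi μ) := by
    exact integrableOn_Ioi_deriv_of_nonneg' (fun x _ => hF x) hpos htend
  have hIoiVal : ∫ x in Ioi μ, x * Real.exp (-x) = (μ + 1) * Real.exp (-μ) := by
    have := integral_Ioi_of_hasDerivAt_of_nonneg' (fun x _ => hF x) hpos htend
    rw [this]; ring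
  -- integrability on the middle
  have hcont : Continuous fun x : ℝ => x * (Real.exp (-|x|) * (x / (2 * μ) + 1 / 2)) :=
    continuous_id.mul ((Real.continuous_exp.comp continuous_abs.neg).mul
      ((continuous_id.div_const _).add continuous_const))
  have hmidInt : IntegrableOn f (Ioc (-μ) μ) := by
    apply IntegrableOn.congr_fun (hcont.integrableOn_Ioc) (fun x hx => (hmid x hx).symm)
      measurableSet_Ioc
  have hrightInt : IntegrableOn f (Ioi μ) := by
    exact IntegrableOn.congr_fun hIoiInt (fun x hx => (hright x hx).symm) measurableSet_Ioi
  -- split the real line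
  have hsplit : Ioc (-μ) μ ∪ Ioi μ = Ioi (-μ) := Ioc_union_Ioi_eq_Ioi (by linarith)
  have hIoiμInt : IntegrableOn f (Ioi (-μ)) := by
    rw [← hsplit]
    exact hmidInt.union hrightInt
  have step1 : (∫ x : ℝ, f x) = ∫ x in Ioi (-μ), f x := by
    conv_lhs => rw [hind]
    exact integral_indicator measurableSet_Ioi
  have step2 : (∫ x in Ioi (-μ), f x) = (∫ x in Ioc (-μ) μ, f x) + ∫ x in Ioi μ, f x := by
    rw [← hsplit]
    exact setIntegral_union (Ioc_disjoint_Ioi le_rfl) measurableSet_Ioi hmidInt hrightInt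
  have step3 : (∫ x in Ioi μ, f x) = (μ + 1) * Real.exp (-μ) := by
    rw [setIntegral_congr_fun measurableSet_Ioi hright, hIoiVal]
  -- middle integral
  have step4 : (∫ x in Ioc (-μ) μ, f x)
      = ∫ x in (-μ)..μ, x * (Real.exp (-|x|) * (x / (2 * μ) + 1 / 2)) := by
    rw [setIntegral_congr_fun measurableSet_Ioc hmid,
      intervalIntegral.integral_of_le (by linarith : -μ ≤ μ)]
  have hii : ∀ a b : ℝ, IntervalIntegrable
      (fun x => x * (Real.exp (-|x|) * (x / (2 * μ) + 1 / 2))) volume a b :=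
    fun a b => hcont.intervalIntegrable a b
  have step5 : (∫ x in (-μ)..μ, x * (Real.exp (-|x|) * (x / (2 * μ) + 1 / 2)))
      = (∫ x in (-μ)..(0:ℝ), x * (Real.exp (-|x|) * (x / (2 * μ) + 1 / 2)))
        + ∫ x in (0:ℝ)..μ, x * (Real.exp (-|x|) * (x / (2 * μ) + 1 / 2)) := by
    rw [intervalIntegral.integral_add_adjacent_intervals (hii _ _) (hii _ _)]
  -- positive part
  have hpart_pos : (∫ x in (0:ℝ)..μ, x * (Real.exp (-|x|) * (x / (2 * μ) + 1 / 2)))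
      = 1 / μ + 1 / 2 - Real.exp (-μ) * ((μ ^ 2 + 2 * μ + 2) / (2 * μ) + (μ + 1) / 2) := by
    have hEq : ∀ x ∈ uIcc (0:ℝ) μ, x * (Real.exp (-|x|) * (x / (2 * μ) + 1 / 2))
        = Real.exp (-x) * (x ^ 2 / (2 * μ) + x / 2) := by
      intro x hx
      rw [uIcc_of_le (by linarith : (0:ℝ) ≤ μ)] at hx
      rw [abs_of_nonneg hx.1]
      ring
    rw [intervalIntegral.integral_congr hEq]
    have hderiv : ∀ x ∈ uIcc (0:ℝ) μ, HasDerivAt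
        (fun y => -Real.exp (-y) * ((y ^ 2 + 2 * y + 2) / (2 * μ) + (y + 1) / 2))
        (Real.exp (-x) * (x ^ 2 / (2 * μ) + x / 2)) x := by
      intro x _
      have h1 : HasDerivAt (fun y : ℝ => -Real.exp (-y)) (Real.exp (-x)) x := by
        simpa [Function.comp_def, Pi.neg_def] using ((Real.hasDerivAt_exp (-x)).comp x ((hasDerivAt_id x).neg)).neg
      have h2 : HasDerivAt (fun y : ℝ => (y ^ 2 + 2 * y + 2) / (2 * μ) + (y + 1) / 2)
          ((2 * x + 2) / (2 * μ) + 1 / 2) x := by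
        have hp : HasDerivAt (fun y : ℝ => y ^ 2 + 2 * y + 2) (2 * x + 2) x := by
          have := ((hasDerivAt_pow 2 x).add (((hasDerivAt_id x).const_mul 2))).add_const 2
          refine this.congr_deriv ?_
          ring
        have := (hp.div_const (2 * μ)).add (((hasDerivAt_id x).add_const 1).div_const 2)
        simpa [Pi.add_def] using this
      have := h1.mul h2
      refine this.congr_deriv ?_
      field_simp
      ring
    rw [intervalIntegral.integral_eq_sub_of_hasDerivAt hderiv
      (((Real.continuous_exp.comp continuous_neg).mul (((continuous_pow 2).div_const _).add
        (continuous_id.div_const _))).intervalIntegrable _ _)]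
    simp only [Real.exp_zero, neg_zero]
    field_simp
    ring
  -- negative part
  have hpart_neg : (∫ x in (-μ)..(0:ℝ), x * (Real.exp (-|x|) * (x / (2 * μ) + 1 / 2)))
      = 1 / μ - 1 / 2 - Real.exp (-μ) * ((μ ^ 2 + 2 * μ + 2) / (2 * μ) - (μ + 1) / 2) := by
    have hEq : ∀ x ∈ uIcc (-μ) (0:ℝ), x * (Real.exp (-|x|) * (x / (2 * μ) + 1 / 2))
        = Real.exp x * (x ^ 2 / (2 * μ) + x / 2) := by
      intro x hx
      rw [uIcc_of_le (by linarith : -μ ≤ (0:ℝ))] at hx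
      rw [abs_of_nonpos hx.2, neg_neg]
      ring
    rw [intervalIntegral.integral_congr hEq]
    have hderiv : ∀ x ∈ uIcc (-μ) (0:ℝ), HasDerivAt
        (fun y => Real.exp y * ((y ^ 2 - 2 * y + 2) / (2 * μ) + (y - 1) / 2))
        (Real.exp x * (x ^ 2 / (2 * μ) + x / 2)) x := by
      intro x _
      have h1 : HasDerivAt (fun y : ℝ => Real.exp y) (Real.exp x) x := Real.hasDerivAt_exp x
      have h2 : HasDerivAt (fun y : ℝ => (y ^ 2 - 2 * y + 2) / (2 * μ) + (y - 1) / 2)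
          ((2 * x - 2) / (2 * μ) + 1 / 2) x := by
        have hp : HasDerivAt (fun y : ℝ => y ^ 2 - 2 * y + 2) (2 * x - 2) x := by
          have := ((hasDerivAt_pow 2 x).sub (((hasDerivAt_id x).const_mul 2))).add_const 2
          refine this.congr_deriv ?_
          ring
        have := (hp.div_const (2 * μ)).add (((hasDerivAt_id x).sub_const 1).div_const 2)
        simpa [Pi.add_def] using this
      have := h1.mul h2
      refine this.congr_deriv ?_
      field_simp
      ring
    rw [intervalIntegral.integral_eq_sub_of_hasDerivAt hderiv
      ((Real.continuous_exp.mul (((continuous_pow 2).div_const _).add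
        (continuous_id.div_const _))).intervalIntegrable _ _)]
    simp only [Real.exp_zero]
    field_simp
    ring
  rw [step1, step2, step3, step4, step5, hpart_pos, hpart_neg]
  field_simp
  ring
end

section
/- For every μ > 0, the third raw moment of SSLUD(μ) satisfies ∫_{ℝ} x^3 · g(x) dx = 24/μ - e^{-μ}(μ^2 + 6μ + 18 + 24/μ). -/
open MeasureTheory Real

theorem sslud_third_moment (μ : ℝ) (hμ : 0 < μ) :
    (∫ x : ℝ, x ^ 3 * g μ x) = 24 / μ - Real.exp (-μ) * (μ ^ 2 + 6 * μ + 18 + 24 / μ) := by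
  have hμ0 : μ ≠ 0 := hμ.ne'
  have hneg : -μ < μ := by linarith
  set f : ℝ → ℝ := fun x => x ^ 3 * g μ x with hf
  -- middle continuous model
  set h0 : ℝ → ℝ := fun x => x ^ 3 * (Real.exp (-|x|) * (x / (2 * μ) + 1 / 2)) with hh0
  have cont0 : Continuous h0 :=
    (continuous_pow 3).mul ((Real.continuous_exp.comp continuous_abs.neg).mul
      ((continuous_id.div_const (2 * μ)).add continuous_const))
  have hEqMid : Set.EqOn f h0 (Set.Ioc (-μ) μ) := by
    intro x hx
    simp only [hf, hh0, g]
    rw [if_neg (not_lt.2 hx.1.le)]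
    by_cases hxμ : x < μ
    · rw [if_pos hxμ]
    · rw [if_neg hxμ]
      have hx2 : x = μ := le_antisymm hx.2 (not_lt.1 hxμ)
      subst hx2
      rw [abs_of_pos hμ]
      have h1 : x / (2 * x) + 1 / 2 = 1 := by field_simp; ring
      rw [h1, mul_one]
  have hEqTail : Set.EqOn f (fun x => x ^ 3 * Real.exp (-x)) (Set.Ioi μ) := by
    intro x hx
    simp only [hf, g]
    rw [if_neg (by push_neg; nlinarith [hx.out]), if_neg (not_lt.2 hx.out.le)]
  -- tail: antiderivative
  have hd3 : ∀ x : ℝ, HasDerivAt (fun y => -(Real.exp (-y) * (y ^ 3 + 3 * y ^ 2 + 6 * y + 6)))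
      (x ^ 3 * Real.exp (-x)) x := by
    intro x
    have he : HasDerivAt (fun y : ℝ => Real.exp (-y)) (-Real.exp (-x)) x := by
      simpa [Function.comp_def] using (Real.hasDerivAt_exp (-x)).comp x (hasDerivAt_neg x)
    have hp : HasDerivAt (fun y : ℝ => y ^ 3 + 3 * y ^ 2 + 6 * y + 6)
        (3 * x ^ 2 + 6 * x + 6) x := by
      have := (((hasDerivAt_pow 3 x).add ((hasDerivAt_pow 2 x).const_mul 3)).add
        ((hasDerivAt_id x).const_mul 6)).add_const 6
      exact this.congr_deriv (by push_cast; ring)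
    have := (he.mul hp).neg
    exact this.congr_deriv (by ring)
  have hT : Filter.Tendsto (fun y : ℝ => -(Real.exp (-y) * (y ^ 3 + 3 * y ^ 2 + 6 * y + 6)))
      Filter.atTop (nhds 0) := by
    have t3 := tendsto_pow_mul_exp_neg_atTop_nhds_zero 3
    have t2 := (tendsto_pow_mul_exp_neg_atTop_nhds_zero 2).const_mul (3:ℝ)
    have t1 := (tendsto_pow_mul_exp_neg_atTop_nhds_zero 1).const_mul (6:ℝ)
    have t0 := Real.tendsto_exp_neg_atTop_nhds_zero.const_mul (6:ℝ)
    have := (((t3.add t2).add t1).add t0).neg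
    have h2 : -(((0:ℝ) + 3 * 0 + 6 * 0) + 6 * 0) = 0 := by norm_num
    rw [h2] at this
    refine this.congr fun y => ?_
    ring
  have nonneg : ∀ x ∈ Set.Ioi μ, 0 ≤ x ^ 3 * Real.exp (-x) := by
    intro x hx
    have hx0 : 0 < x := lt_trans hμ hx
    positivity
  have intTail : IntegrableOn (fun x => x ^ 3 * Real.exp (-x)) (Set.Ioi μ) :=
    integrableOn_Ioi_deriv_of_nonneg' (fun x _ => hd3 x) nonneg hT
  have valTail : ∫ x in Set.Ioi μ, x ^ 3 * Real.exp (-x)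
      = 0 - (-(Real.exp (-μ) * (μ ^ 3 + 3 * μ ^ 2 + 6 * μ + 6))) :=
    integral_Ioi_of_hasDerivAt_of_nonneg' (fun x _ => hd3 x) nonneg hT
  -- integrability on pieces
  have intMid : IntegrableOn f (Set.Ioc (-μ) μ) :=
    (cont0.integrableOn_Ioc).congr_fun hEqMid.symm measurableSet_Ioc
  have intTail' : IntegrableOn f (Set.Ioi μ) :=
    intTail.congr_fun hEqTail.symm measurableSet_Ioi
  -- step 1: restrict to Ioi (-μ)
  have h1 : (∫ x : ℝ, f x) = ∫ x in Set.Ioi (-μ), f x := by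
    refine (setIntegral_eq_integral_of_forall_compl_eq_zero ?_).symm
    intro x hx
    simp only [Set.mem_Ioi, not_lt] at hx
    simp only [hf, g]
    rcases eq_or_lt_of_le hx with h | h
    · rw [if_neg (by linarith), if_pos (by linarith)]
      have : x / (2 * μ) + 1 / 2 = 0 := by rw [h]; field_simp; ring
      rw [this, mul_zero, mul_zero]
    · rw [if_pos h, mul_zero]
  -- step 2: split at μ
  have h2 : (∫ x in Set.Ioi (-μ), f x)
      = (∫ x in Set.Ioc (-μ) μ, f x) + ∫ x in Set.Ioi μ, f x := by
    rw [← setIntegral_union (Set.Ioc_disjoint_Ioi le_rfl) measurableSet_Ioi intMid intTail',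
      Set.Ioc_union_Ioi_eq_Ioi hneg.le]
  -- middle part
  have hd1 : ∀ x : ℝ, HasDerivAt (fun y => Real.exp y *
      ((y ^ 4 - 4 * y ^ 3 + 12 * y ^ 2 - 24 * y + 24) / (2 * μ)
        + (y ^ 3 - 3 * y ^ 2 + 6 * y - 6) / 2))
      (x ^ 3 * (Real.exp x * (x / (2 * μ) + 1 / 2))) x := by
    intro x
    have hq : HasDerivAt (fun y : ℝ => y ^ 4 - 4 * y ^ 3 + 12 * y ^ 2 - 24 * y + 24)
        (4 * x ^ 3 - 12 * x ^ 2 + 24 * x - 24) x := by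
      have := ((((hasDerivAt_pow 4 x).sub ((hasDerivAt_pow 3 x).const_mul 4)).add
        ((hasDerivAt_pow 2 x).const_mul 12)).sub ((hasDerivAt_id x).const_mul 24)).add_const 24
      exact this.congr_deriv (by push_cast; ring)
    have hr : HasDerivAt (fun y : ℝ => y ^ 3 - 3 * y ^ 2 + 6 * y - 6)
        (3 * x ^ 2 - 6 * x + 6) x := by
      have := (((hasDerivAt_pow 3 x).sub ((hasDerivAt_pow 2 x).const_mul 3)).add
        ((hasDerivAt_id x).const_mul 6)).sub_const 6
      exact this.congr_deriv (by push_cast; ring)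
    have := (Real.hasDerivAt_exp x).mul ((hq.div_const (2 * μ)).add (hr.div_const 2))
    exact this.congr_deriv (by simp only [Pi.add_apply]; ring)
  have hd2 : ∀ x : ℝ, HasDerivAt (fun y => -(Real.exp (-y) *
      ((y ^ 4 + 4 * y ^ 3 + 12 * y ^ 2 + 24 * y + 24) / (2 * μ)
        + (y ^ 3 + 3 * y ^ 2 + 6 * y + 6) / 2)))
      (x ^ 3 * (Real.exp (-x) * (x / (2 * μ) + 1 / 2))) x := by
    intro x
    have he : HasDerivAt (fun y : ℝ => Real.exp (-y)) (-Real.exp (-x)) x := by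
      simpa [Function.comp_def] using (Real.hasDerivAt_exp (-x)).comp x (hasDerivAt_neg x)
    have hq : HasDerivAt (fun y : ℝ => y ^ 4 + 4 * y ^ 3 + 12 * y ^ 2 + 24 * y + 24)
        (4 * x ^ 3 + 12 * x ^ 2 + 24 * x + 24) x := by
      have := ((((hasDerivAt_pow 4 x).add ((hasDerivAt_pow 3 x).const_mul 4)).add
        ((hasDerivAt_pow 2 x).const_mul 12)).add ((hasDerivAt_id x).const_mul 24)).add_const 24
      exact this.congr_deriv (by push_cast; ring)
    have hr : HasDerivAt (fun y : ℝ => y ^ 3 + 3 * y ^ 2 + 6 * y + 6)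
        (3 * x ^ 2 + 6 * x + 6) x := by
      have := (((hasDerivAt_pow 3 x).add ((hasDerivAt_pow 2 x).const_mul 3)).add
        ((hasDerivAt_id x).const_mul 6)).add_const 6
      exact this.congr_deriv (by push_cast; ring)
    have := (he.mul ((hq.div_const (2 * μ)).add (hr.div_const 2))).neg
    exact this.congr_deriv (by simp only [Pi.add_apply]; ring)
  have contL : Continuous fun x : ℝ => x ^ 3 * (Real.exp x * (x / (2 * μ) + 1 / 2)) :=
    (continuous_pow 3).mul (Real.continuous_exp.mul
      ((continuous_id.div_const (2 * μ)).add continuous_const))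
  have contR : Continuous fun x : ℝ => x ^ 3 * (Real.exp (-x) * (x / (2 * μ) + 1 / 2)) :=
    (continuous_pow 3).mul ((Real.continuous_exp.comp continuous_neg).mul
      ((continuous_id.div_const (2 * μ)).add continuous_const))
  have p1 : (∫ x in (-μ)..(0:ℝ), h0 x)
      = (Real.exp 0 * ((0 - 0 + 0 - 0 + 24) / (2 * μ) + (0 - 0 + 0 - 6) / 2))
        - Real.exp (-μ) * (((-μ) ^ 4 - 4 * (-μ) ^ 3 + 12 * (-μ) ^ 2 - 24 * (-μ) + 24) / (2 * μ)
          + ((-μ) ^ 3 - 3 * (-μ) ^ 2 + 6 * (-μ) - 6) / 2) := by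
    rw [show (∫ x in (-μ)..(0:ℝ), h0 x)
        = ∫ x in (-μ)..(0:ℝ), x ^ 3 * (Real.exp x * (x / (2 * μ) + 1 / 2)) from
      intervalIntegral.integral_congr (fun x hx => by
        rw [Set.uIcc_of_le (by linarith : -μ ≤ (0:ℝ))] at hx
        simp only [hh0]
        rw [abs_of_nonpos hx.2, neg_neg])]
    have := intervalIntegral.integral_eq_sub_of_hasDerivAt (f := fun y => Real.exp y *
      ((y ^ 4 - 4 * y ^ 3 + 12 * y ^ 2 - 24 * y + 24) / (2 * μ)
        + (y ^ 3 - 3 * y ^ 2 + 6 * y - 6) / 2)) (a := -μ) (b := 0)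
      (fun x _ => hd1 x) (contL.intervalIntegrable _ _)
    rw [this]
    norm_num
  have p2 : (∫ x in (0:ℝ)..μ, h0 x)
      = (-(Real.exp (-μ) * ((μ ^ 4 + 4 * μ ^ 3 + 12 * μ ^ 2 + 24 * μ + 24) / (2 * μ)
          + (μ ^ 3 + 3 * μ ^ 2 + 6 * μ + 6) / 2)))
        - (-(Real.exp 0 * ((0 + 0 + 0 + 0 + 24) / (2 * μ) + (0 + 0 + 0 + 6) / 2))) := by
    rw [show (∫ x in (0:ℝ)..μ, h0 x)
        = ∫ x in (0:ℝ)..μ, x ^ 3 * (Real.exp (-x) * (x / (2 * μ) + 1 / 2)) from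
      intervalIntegral.integral_congr (fun x hx => by
        rw [Set.uIcc_of_le hμ.le] at hx
        simp only [hh0]
        rw [abs_of_nonneg hx.1])]
    have := intervalIntegral.integral_eq_sub_of_hasDerivAt (f := fun y => -(Real.exp (-y) *
      ((y ^ 4 + 4 * y ^ 3 + 12 * y ^ 2 + 24 * y + 24) / (2 * μ)
        + (y ^ 3 + 3 * y ^ 2 + 6 * y + 6) / 2))) (a := 0) (b := μ)
      (fun x _ => hd2 x) (contR.intervalIntegrable _ _)
    rw [this]
    norm_num
  have hMid : (∫ x in Set.Ioc (-μ) μ, f x) = (∫ x in (-μ)..(0:ℝ), h0 x) + ∫ x in (0:ℝ)..μ, h0 x := by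
    rw [setIntegral_congr_fun measurableSet_Ioc hEqMid,
      ← intervalIntegral.integral_of_le hneg.le,
      ← intervalIntegral.integral_add_adjacent_intervals (a := -μ) (b := 0) (c := μ)
        (cont0.intervalIntegrable _ _) (cont0.intervalIntegrable _ _)]
  have hTailVal : (∫ x in Set.Ioi μ, f x)
      = 0 - (-(Real.exp (-μ) * (μ ^ 3 + 3 * μ ^ 2 + 6 * μ + 6))) := by
    rw [setIntegral_congr_fun measurableSet_Ioi hEqTail]
    exact valTail
  rw [h1, h2, hMid, hTailVal, p1, p2, Real.exp_zero]
  field_simp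
  ring
end

section
/- For every μ > 0 and every positive integer r, the even-order raw moments of SSLUD(μ) satisfy ∫_{ℝ} x^{2r} · g(x) dx = (2r)! ; in particular the second raw moment equals 2 and the fourth raw moment equals 24. -/
open MeasureTheory Real

lemma g_add_neg (μ : ℝ) (hμ : 0 < μ) (x : ℝ) : g μ x + g μ (-x) = Real.exp (-|x|) := by
  unfold g
  rcases lt_trichotomy x (-μ) with h | h | h
  · have h1 : ¬ -x < -μ := by linarith
    have h2 : ¬ -x < μ := by linarith
    have h3 : |x| = -x := abs_of_neg (by linarith)
    simp [h, h1, h2, h3]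
  · have h1 : ¬ x < -μ := by linarith
    have h2 : x < μ := by linarith
    have h3 : ¬ -x < -μ := by linarith
    have h4 : ¬ -x < μ := by linarith
    have h5 : |x| = -x := by rw [abs_of_nonpos (by linarith)]
    simp only [h1, h2, h3, h4, if_true, if_false]
    have h6 : x / (2 * μ) + 1 / 2 = 0 := by rw [h]; field_simp; ring
    rw [h6, mul_zero, zero_add, h5]
  · by_cases h' : x < μ
    · have h1 : ¬ x < -μ := by linarith
      have h2 : -x < μ := by linarith
      have h3 : ¬ -x < -μ := by linarith
      have h4 : |(-x)| = |x| := abs_neg x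
      simp only [h1, h', h3, h2, if_true, if_false, h4]
      rw [← mul_add]
      have : x / (2 * μ) + 1 / 2 + (-x / (2 * μ) + 1 / 2) = 1 := by field_simp; ring
      rw [this, mul_one]
    · have h1 : ¬ x < -μ := by linarith
      have h5 : |x| = x := abs_of_pos (by linarith)
      have hx : μ ≤ x := le_of_not_gt h'
      simp only [h1, h', if_false]
      by_cases h3 : -x < -μ
      · simp [h3, h5]
      · have hxe : x = μ := by linarith [le_of_not_gt h3]
        have h4 : -x < μ := by linarith
        simp only [h3, h4, if_true, if_false]
        have h6 : -x / (2 * μ) + 1 / 2 = 0 := by rw [hxe]; field_simp; ring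
        rw [h6, mul_zero, add_zero, h5]

lemma measurable_g (μ : ℝ) : Measurable (g μ) := by
  unfold g
  apply Measurable.ite (measurableSet_lt measurable_id measurable_const) measurable_const
  apply Measurable.ite (measurableSet_lt measurable_id measurable_const)
  · exact ((measurable_id.abs.neg).exp).mul ((measurable_id.div_const _).add measurable_const)
  · exact measurable_id.neg.exp

lemma g_nonneg (μ : ℝ) (hμ : 0 < μ) (x : ℝ) : 0 ≤ g μ x := by
  unfold g
  split_ifs with h1 h2
  · exact le_rfl
  · have e : x / (2 * μ) + 1 / 2 = (x + μ) / (2 * μ) := by field_simp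
    have : 0 ≤ (x + μ) / (2 * μ) := div_nonneg (by linarith [le_of_not_gt h1]) (by linarith)
    rw [e]
    positivity
  · positivity

lemma g_le (μ : ℝ) (hμ : 0 < μ) (x : ℝ) : g μ x ≤ Real.exp (-|x|) := by
  unfold g
  split_ifs with h1 h2
  · positivity
  · have e : x / (2 * μ) + 1 / 2 = (x + μ) / (2 * μ) := by field_simp
    have h : x / (2 * μ) + 1 / 2 ≤ 1 := by
      rw [e, div_le_one (by linarith)]
      linarith
    have h0 : 0 ≤ x / (2 * μ) + 1 / 2 := by
      rw [e]
      exact div_nonneg (by linarith [le_of_not_gt h1]) (by linarith)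
    nlinarith [Real.exp_pos (-|x|)]
  · have hx : |x| = x := abs_of_pos (by nlinarith [le_of_not_gt h1, le_of_not_gt h2])
    rw [hx]

lemma integrable_abs_pow_exp (n : ℕ) :
    Integrable (fun x : ℝ => |x| ^ n * Real.exp (-|x|)) := by
  have hIoi : IntegrableOn (fun x : ℝ => |x| ^ n * Real.exp (-|x|)) (Set.Ioi 0) := by
    have h := Real.GammaIntegral_convergent (s := (n : ℝ) + 1) (by positivity)
    refine h.congr_fun ?_ measurableSet_Ioi
    intro x hx
    have hx0 : (0:ℝ) < x := hx
    show Real.exp (-x) * x ^ ((n:ℝ) + 1 - 1) = |x| ^ n * Real.exp (-|x|)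
    rw [abs_of_pos hx0, add_sub_cancel_right, Real.rpow_natCast, mul_comm]
  have hIic : IntegrableOn (fun x : ℝ => |x| ^ n * Real.exp (-|x|)) (Set.Iic 0) := by
    rw [← Measure.map_neg_eq_self (volume : Measure ℝ)]
    have m : MeasurableEmbedding fun x : ℝ => -x := (Homeomorph.neg ℝ).measurableEmbedding
    rw [m.integrableOn_map_iff]
    simp_rw [Function.comp_def, abs_neg, Set.neg_preimage, Set.neg_Iic, neg_zero]
    exact (integrableOn_Ici_iff_integrableOn_Ioi (f := fun x : ℝ => |x| ^ n * Real.exp (-|x|))).mpr hIoi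
  rw [← integrableOn_univ, ← Set.Iic_union_Ioi (a := (0:ℝ)), integrableOn_union]
  exact ⟨hIic, hIoi⟩

lemma even_moment (μ : ℝ) (hμ : 0 < μ) (n : ℕ) (hn : Even n) :
    (∫ x : ℝ, x ^ n * g μ x) = (Nat.factorial n : ℝ) := by
  have hmeas : AEStronglyMeasurable (fun x : ℝ => x ^ n * g μ x) volume :=
    ((measurable_id.pow_const n).mul (measurable_g μ)).aestronglyMeasurable
  have hint : Integrable (fun x : ℝ => x ^ n * g μ x) := by
    refine (integrable_abs_pow_exp n).mono' hmeas ?_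
    filter_upwards with x
    rw [norm_mul, norm_pow, Real.norm_eq_abs, Real.norm_eq_abs,
      abs_of_nonneg (g_nonneg μ hμ x)]
    exact mul_le_mul_of_nonneg_left (g_le μ hμ x) (by positivity)
  have hneg : (fun x : ℝ => x ^ n * g μ (-x)) = (fun x : ℝ => x ^ n * g μ x) ∘ Neg.neg := by
    funext x
    simp [Function.comp, hn.neg_pow]
  have hint2 : Integrable (fun x : ℝ => x ^ n * g μ (-x)) := by
    rw [hneg]; exact hint.comp_neg
  have hsymm : (∫ x : ℝ, x ^ n * g μ (-x)) = ∫ x : ℝ, x ^ n * g μ x := by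
    rw [hneg]
    have A : MeasurableEmbedding (fun x : ℝ => -x) := (Homeomorph.neg ℝ).measurableEmbedding
    conv_rhs => rw [← Measure.map_neg_eq_self (volume : Measure ℝ)]
    rw [A.integral_map]
    rfl
  have hsum : (∫ x : ℝ, x ^ n * g μ x) + (∫ x : ℝ, x ^ n * g μ (-x))
      = ∫ x : ℝ, x ^ n * Real.exp (-|x|) := by
    rw [← integral_add hint hint2]
    congr 1
    funext x
    rw [← mul_add, g_add_neg μ hμ x]
  have habs : (∫ x : ℝ, x ^ n * Real.exp (-|x|)) = 2 * (Nat.factorial n : ℝ) := by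
    have e1 : (fun x : ℝ => x ^ n * Real.exp (-|x|))
        = fun x : ℝ => (fun t : ℝ => t ^ n * Real.exp (-t)) |x| := by
      funext x
      simp only
      rw [hn.pow_abs]
    rw [e1, integral_comp_abs (f := fun t : ℝ => t ^ n * Real.exp (-t))]
    congr 1
    have hg : (Nat.factorial n : ℝ) = ∫ x in Set.Ioi (0:ℝ), Real.exp (-x) * x ^ ((n:ℝ) + 1 - 1) := by
      rw [← Real.Gamma_eq_integral (by positivity : (0:ℝ) < (n:ℝ) + 1), Real.Gamma_nat_eq_factorial]
    rw [hg]
    refine setIntegral_congr_fun measurableSet_Ioi fun x hx => ?_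
    have hx0 : (0:ℝ) < x := hx
    rw [add_sub_cancel_right, Real.rpow_natCast, mul_comm]
  have : 2 * (∫ x : ℝ, x ^ n * g μ x) = 2 * (Nat.factorial n : ℝ) := by
    rw [two_mul]
    nth_rewrite 2 [← hsymm]
    rw [hsum, habs]
  linarith

theorem sslud_even_moments (μ : ℝ) (hμ : 0 < μ) :
    (∀ r : ℕ, 0 < r → (∫ x : ℝ, x ^ (2 * r) * g μ x) = (Nat.factorial (2 * r) : ℝ)) ∧
    (∫ x : ℝ, x ^ 2 * g μ x) = 2 ∧ (∫ x : ℝ, x ^ 4 * g μ x) = 24 := by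
  refine ⟨fun r _ => even_moment μ hμ (2 * r) (even_two_mul r), ?_, ?_⟩
  · have := even_moment μ hμ 2 (by decide)
    simpa [Nat.factorial] using this
  · have := even_moment μ hμ 4 (by decide)
    simpa [Nat.factorial] using this
end

section
/- For every μ with 0 < μ < 1/2, the density g of SSLUD(μ) attains its maximum at the point μ: for all real x, g(x) ≤ g(μ), where g(μ) = e^{-μ}. -/
open MeasureTheory Real

theorem sslud_mode_small (μ : ℝ) (hμ : 0 < μ) (hμ' : μ < 1 / 2) :
    (∀ x : ℝ, g μ x ≤ g μ μ) ∧ g μ μ = Real.exp (-μ) := by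
  have hg : g μ μ = Real.exp (-μ) := by
    unfold g
    rw [if_neg (by linarith), if_neg (by linarith)]
  refine ⟨fun x => ?_, hg⟩
  rw [hg]
  unfold g
  split_ifs with h1 h2
  · positivity
  · push_neg at h1
    have key : x / (2 * μ) + 1 / 2 ≤ Real.exp (|x| - μ) := by
      have h3 := Real.add_one_le_exp (|x| - μ)
      have h4 : x / (2 * μ) + 1 / 2 ≤ |x| - μ + 1 := by
        have heq : x / (2 * μ) + 1 / 2 = (x + μ) / (2 * μ) := by
          field_simp
        rw [heq, div_le_iff₀ (by positivity)]
        rcases abs_cases x with ⟨hx, _⟩ | ⟨hx, _⟩ <;> rw [hx] <;> nlinarith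
      linarith
    calc Real.exp (-|x|) * (x / (2 * μ) + 1 / 2)
        ≤ Real.exp (-|x|) * Real.exp (|x| - μ) := by
          exact mul_le_mul_of_nonneg_left key (Real.exp_pos _).le
      _ = Real.exp (-μ) := by rw [← Real.exp_add]; ring_nf
  · exact Real.exp_le_exp.2 (by push_neg at h2; linarith)
end

section
/- For every μ with 1/2 ≤ μ < 1, the density g of SSLUD(μ) attains its maximum at the point 1 - μ: for all real x, g(x) ≤ g(1 - μ). -/
open MeasureTheory Real

theorem sslud_mode_mid (μ : ℝ) (h1 : 1 / 2 ≤ μ) (h2 : μ < 1) :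
    ∀ x : ℝ, g μ x ≤ g μ (1 - μ) := by
  have hμ : 0 < μ := by linarith
  have hval : g μ (1 - μ) = Real.exp (μ - 1) / (2 * μ) := by
    unfold g
    rw [if_neg (by linarith)]
    by_cases h : 1 - μ < μ
    · rw [if_pos h, abs_of_nonneg (by linarith)]
      rw [show -(1 - μ) = μ - 1 by ring]
      field_simp
      ring
    · rw [if_neg h]
      have hμ' : μ = 1 / 2 := by linarith [not_lt.mp h]
      rw [hμ']
      norm_num
  rw [hval]
  intro x
  unfold g
  split_ifs with hx1 hx2
  · positivity
  · rcases le_or_gt x 0 with hx0 | hx0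
    · have h1' : Real.exp (-|x|) ≤ 1 := by
        rw [Real.exp_le_one_iff]; simp [abs_nonneg]
      have h2' : (0:ℝ) ≤ x / (2 * μ) + 1 / 2 := by
        have : -μ ≤ x := not_lt.mp hx1
        have : -(1/2 : ℝ) ≤ x / (2 * μ) := by
          rw [le_div_iff₀ (by linarith)]; nlinarith
        linarith
      have h3' : x / (2 * μ) + 1 / 2 ≤ 1 / 2 := by
        have : x / (2 * μ) ≤ 0 := div_nonpos_iff.mpr (Or.inr ⟨hx0, by linarith⟩)
        linarith
      have hexpμ : μ ≤ Real.exp (μ - 1) := by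
        have := Real.add_one_le_exp (μ - 1); linarith
      calc Real.exp (-|x|) * (x / (2 * μ) + 1 / 2)
          ≤ 1 * (1/2) := mul_le_mul h1' h3' h2' (by norm_num)
        _ ≤ Real.exp (μ - 1) / (2 * μ) := by
            rw [le_div_iff₀ (by linarith)]; nlinarith
    · rw [abs_of_pos hx0]
      have key : Real.exp (-x) * (x + μ) ≤ Real.exp (μ - 1) := by
        have h := Real.add_one_le_exp (x + μ - 1)
        have : Real.exp (x + μ - 1) = Real.exp x * Real.exp (μ - 1) := by
          rw [← Real.exp_add]; ring_nf
        rw [Real.exp_neg, inv_mul_le_iff₀ (Real.exp_pos x)]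
        nlinarith [Real.exp_pos x, Real.exp_pos (μ - 1)]
      have : x / (2 * μ) + 1 / 2 = (x + μ) / (2 * μ) := by field_simp
      rw [this, mul_div_assoc', div_le_div_iff₀ (by linarith) (by linarith)]
      nlinarith [Real.exp_pos (μ - 1)]
  · have hxμ : μ ≤ x := not_lt.mp hx2
    have h := Real.add_one_le_exp (x + μ - 1)
    have hle : Real.exp (-x) ≤ Real.exp (-μ) := Real.exp_le_exp.mpr (by linarith)
    have h2' : Real.exp (-μ) ≤ Real.exp (μ - 1) / (2 * μ) := by
      rw [le_div_iff₀ (by linarith), Real.exp_neg, inv_mul_le_iff₀ (Real.exp_pos μ)]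
      have hexp : Real.exp (μ - 1) * Real.exp μ = Real.exp (2*μ - 1) := by
        rw [← Real.exp_add]; ring_nf
      have h2 := Real.add_one_le_exp (2*μ - 1)
      linarith
    linarith
end

section
/- For every μ with μ ≥ 1, the density g of SSLUD(μ) attains its maximum at the point 0: for all real x, g(x) ≤ g(0), where g(0) = 1/2. -/
open MeasureTheory Real

theorem sslud_mode_large (μ : ℝ) (hμ : 1 ≤ μ) :
    (∀ x : ℝ, g μ x ≤ g μ 0) ∧ g μ 0 = 1 / 2 := by
  have hμ0 : (0:ℝ) < μ := lt_of_lt_of_le one_pos hμ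
  have hg0 : g μ 0 = 1 / 2 := by
    simp [g, hμ0, not_lt.mpr (le_of_lt (neg_lt_zero.mpr hμ0))]
  refine ⟨fun x => ?_, hg0⟩
  rw [hg0]
  unfold g
  split_ifs with h1 h2
  · norm_num
  · push_neg at h1
    rcases le_or_gt x 0 with hx | hx
    · have h3 : Real.exp (-|x|) ≤ 1 := by
        apply Real.exp_le_one_iff.mpr
        simp [neg_nonpos]
      have h4 : x / (2 * μ) + 1 / 2 ≤ 1 / 2 := by
        have : x / (2 * μ) ≤ 0 := div_nonpos_of_nonpos_of_nonneg hx (by positivity)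
        linarith
      have h5 : 0 ≤ x / (2 * μ) + 1 / 2 := by
        have : -(1/2 : ℝ) ≤ x / (2 * μ) := by
          rw [le_div_iff₀ (by positivity : (0:ℝ) < 2*μ)]
          nlinarith
        linarith
      calc Real.exp (-|x|) * (x / (2 * μ) + 1 / 2) ≤ 1 * (1/2) := by
            apply mul_le_mul h3 h4 h5 (by norm_num)
        _ = 1/2 := by ring
    · have hxa : |x| = x := abs_of_pos hx
      rw [hxa]
      have h4 : x / (2 * μ) + 1 / 2 ≤ (x + 1) / 2 := by
        have : x / (2 * μ) ≤ x / 2 := by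
          apply div_le_div_of_nonneg_left (le_of_lt hx) (by norm_num) (by linarith)
        linarith
      have h5 : Real.exp (-x) * ((x + 1) / 2) ≤ 1 / 2 := by
        have h6 : x + 1 ≤ Real.exp x := Real.add_one_le_exp x
        have h7 : Real.exp (-x) * (x + 1) ≤ 1 := by
          rw [Real.exp_neg]
          rw [inv_mul_le_iff₀ (Real.exp_pos x)]
          linarith
        linarith
      calc Real.exp (-x) * (x / (2 * μ) + 1 / 2)
          ≤ Real.exp (-x) * ((x + 1) / 2) := by
            apply mul_le_mul_of_nonneg_left h4 (le_of_lt (Real.exp_pos _))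
        _ ≤ 1 / 2 := h5
  · push_neg at h1 h2
    have : 1 ≤ x := le_trans hμ h2
    calc Real.exp (-x) ≤ Real.exp (-1) := Real.exp_le_exp.mpr (by linarith)
      _ ≤ 1/2 := by
        rw [Real.exp_neg]
        rw [inv_le_comm₀ (Real.exp_pos 1) (by norm_num)]
        calc (1/2:ℝ)⁻¹ = 2 := by norm_num
          _ ≤ Real.exp 1 := by linarith [Real.add_one_le_exp 1]
end

section
/- For every μ with 0 < μ ≤ ln 2 (equivalently, G(μ) = 1 - e^{-μ} ≤ 1/2), the median of SSLUD(μ) equals ln 2; that is, G(ln 2) = 1/2. -/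
open MeasureTheory Real

lemma int_left (μ : ℝ) (hμ : 0 < μ) :
    ∫ x in (-μ)..0, Real.exp x * (x / (2 * μ) + 1 / 2)
      = 1/2 - 1/(2*μ) + Real.exp (-μ) / (2*μ) := by
  have hne : (2*μ) ≠ 0 := by positivity
  have hd : ∀ x : ℝ, HasDerivAt (fun x => Real.exp x * ((x - 1) / (2*μ) + 1/2))
      (Real.exp x * (x / (2*μ) + 1/2)) x := by
    intro x
    have h1 := (Real.hasDerivAt_exp x).mul
      ((((hasDerivAt_id x).sub_const 1).div_const (2*μ)).add_const (1/2))
    refine h1.congr_deriv ?_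
    simp only [id]
    field_simp
    ring
  rw [intervalIntegral.integral_eq_sub_of_hasDerivAt (fun x _ => hd x)
    (by apply Continuous.intervalIntegrable; continuity)]
  simp [Real.exp_zero]
  field_simp
  ring

lemma int_right (μ : ℝ) (hμ : 0 < μ) :
    ∫ x in (0 : ℝ)..μ, Real.exp (-x) * (x / (2 * μ) + 1 / 2)
      = 1/2 + 1/(2*μ) - Real.exp (-μ) * (1 + 1/(2*μ)) := by
  have hne : (2*μ) ≠ 0 := by positivity
  have hd : ∀ x : ℝ, HasDerivAt (fun x => -Real.exp (-x) * ((x + 1) / (2*μ) + 1/2))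
      (Real.exp (-x) * (x / (2*μ) + 1/2)) x := by
    intro x
    have he : HasDerivAt (fun x : ℝ => Real.exp (-x)) (-Real.exp (-x)) x := by
      have := (Real.hasDerivAt_exp (-x)).comp x (hasDerivAt_neg x)
      simpa [Function.comp_def] using this
    have h1 := (he.neg).mul
      ((((hasDerivAt_id x).add_const 1).div_const (2*μ)).add_const (1/2))
    refine h1.congr_deriv ?_
    simp only [id, Pi.neg_apply]
    field_simp
    ring
  rw [intervalIntegral.integral_eq_sub_of_hasDerivAt (fun x _ => hd x)
    (by apply Continuous.intervalIntegrable; continuity)]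
  simp [Real.exp_zero]
  field_simp
  ring

lemma int_exp (a b : ℝ) : ∫ x in a..b, Real.exp (-x) = Real.exp (-a) - Real.exp (-b) := by
  have hd : ∀ x : ℝ, HasDerivAt (fun x : ℝ => -Real.exp (-x)) (Real.exp (-x)) x := by
    intro x
    have := (Real.hasDerivAt_exp (-x)).comp x (hasDerivAt_neg x)
    simpa [Function.comp_def, Pi.neg_def] using this.neg
  rw [intervalIntegral.integral_eq_sub_of_hasDerivAt (fun x _ => hd x)
    (by apply Continuous.intervalIntegrable; continuity)]
  ring

theorem sslud_median (μ : ℝ) (hμ : 0 < μ) (hμ' : μ ≤ Real.log 2) :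
    G μ (Real.log 2) = 1 / 2 := by
  have hne : (2*μ) ≠ 0 := by positivity
  have hneg : -μ ≤ μ := by linarith
  have hne2 : -μ ≤ Real.log 2 := by linarith
  have hcont : Continuous (fun x : ℝ => Real.exp (-|x|) * (x / (2 * μ) + 1 / 2)) := by
    continuity
  -- g = indicator of Ioi (-μ)
  have hkey : g μ = Set.indicator (Set.Ioi (-μ)) (g μ) := by
    funext x
    by_cases h : x ∈ Set.Ioi (-μ)
    · rw [Set.indicator_of_mem h]
    · rw [Set.indicator_of_notMem h]
      simp only [Set.mem_Ioi, not_lt] at h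
      unfold g
      rcases lt_or_eq_of_le h with h' | h'
      · rw [if_pos h']
      · rw [if_neg (by linarith), if_pos (by linarith)]
        subst h'
        rw [abs_neg, abs_of_pos hμ]
        have : (-μ) / (2 * μ) + 1/2 = 0 := by field_simp; ring
        rw [this, mul_zero]
  unfold G
  rw [hkey, MeasureTheory.setIntegral_indicator measurableSet_Ioi,
    Set.inter_comm, Set.Ioi_inter_Iic]
  -- split Ioc (-μ) (log 2) = Ioc (-μ) μ ∪ Ioc μ (log 2)
  have hsplit : Set.Ioc (-μ) (Real.log 2) = Set.Ioc (-μ) μ ∪ Set.Ioc μ (Real.log 2) :=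
    (Set.Ioc_union_Ioc_eq_Ioc hneg hμ').symm
  have heq1 : ∀ x ∈ Set.Ioc (-μ) μ, g μ x = Real.exp (-|x|) * (x / (2 * μ) + 1 / 2) := by
    intro x hx
    unfold g
    rw [if_neg (by simp at hx; linarith [hx.1])]
    rcases lt_or_eq_of_le hx.2 with h' | h'
    · rw [if_pos h']
    · rw [if_neg (by linarith)]
      rw [h', abs_of_pos hμ]
      have : μ / (2 * μ) + 1/2 = 1 := by field_simp; ring
      rw [this, mul_one]
  have heq2 : ∀ x ∈ Set.Ioc μ (Real.log 2), g μ x = Real.exp (-x) := by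
    intro x hx
    simp only [Set.mem_Ioc] at hx
    unfold g
    rw [if_neg (by linarith [hx.1]), if_neg (by linarith [hx.1])]
  have hint1 : IntegrableOn (g μ) (Set.Ioc (-μ) μ) := by
    apply (hcont.integrableOn_Ioc).congr_fun (fun x hx => (heq1 x hx).symm) measurableSet_Ioc
  have hint2 : IntegrableOn (g μ) (Set.Ioc μ (Real.log 2)) := by
    apply ((continuous_exp.comp continuous_neg).integrableOn_Ioc).congr_fun
      (fun x hx => (heq2 x hx).symm) measurableSet_Ioc
  rw [hsplit, MeasureTheory.setIntegral_union (Set.Ioc_disjoint_Ioc_of_le le_rfl) measurableSet_Ioc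
    hint1 hint2]
  rw [MeasureTheory.setIntegral_congr_fun measurableSet_Ioc heq1,
      MeasureTheory.setIntegral_congr_fun measurableSet_Ioc heq2,
      ← intervalIntegral.integral_of_le hneg,
      ← intervalIntegral.integral_of_le hμ']
  -- middle integral: split at 0
  have hii1 : IntervalIntegrable (fun x : ℝ => Real.exp (-|x|) * (x / (2 * μ) + 1 / 2))
      volume (-μ) 0 := hcont.intervalIntegrable _ _
  have hii2 : IntervalIntegrable (fun x : ℝ => Real.exp (-|x|) * (x / (2 * μ) + 1 / 2))
      volume 0 μ := hcont.intervalIntegrable _ _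
  rw [← intervalIntegral.integral_add_adjacent_intervals hii1 hii2]
  have hL : ∫ x in (-μ)..0, Real.exp (-|x|) * (x / (2 * μ) + 1 / 2)
      = ∫ x in (-μ)..0, Real.exp x * (x / (2 * μ) + 1 / 2) := by
    apply intervalIntegral.integral_congr
    intro x hx
    rw [Set.uIcc_of_le (by linarith)] at hx
    simp only
    rw [abs_of_nonpos hx.2, neg_neg]
  have hR : ∫ x in (0:ℝ)..μ, Real.exp (-|x|) * (x / (2 * μ) + 1 / 2)
      = ∫ x in (0:ℝ)..μ, Real.exp (-x) * (x / (2 * μ) + 1 / 2) := by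
    apply intervalIntegral.integral_congr
    intro x hx
    rw [Set.uIcc_of_le (by linarith)] at hx
    simp only
    rw [abs_of_nonneg hx.1]
  rw [hL, hR, int_left μ hμ, int_right μ hμ, int_exp]
  have h2 : Real.exp (-Real.log 2) = 1/2 := by
    rw [Real.exp_neg, Real.exp_log (by norm_num)]
    norm_num
  rw [h2]
  field_simp
  ring
end

section
/- For every μ > 0 and every real x with 0 ≤ x < μ, the hazard rate of SSLUD(μ) satisfies g(x)/(1 - G(x)) = [1 + (1 - e^{x-μ})/(x + μ)]^{-1}. -/
open MeasureTheory Real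

lemma int1 (μ : ℝ) (hμ : 0 < μ) :
    ∫ t in (-μ)..0, g μ t =
      (1 / 2 - 1 / (2 * μ)) - (Real.exp (-μ) * (-μ / (2 * μ) + 1 / 2 - 1 / (2 * μ))) := by
  have hcong : ∫ t in (-μ)..0, g μ t
      = ∫ t in (-μ)..0, Real.exp t * (t / (2 * μ) + 1 / 2) := by
    apply intervalIntegral.integral_congr
    intro t ht
    rw [Set.uIcc_of_le (by linarith)] at ht
    obtain ⟨ha, hb⟩ := ht
    simp only [g]
    rw [if_neg (by linarith), if_pos (by linarith), abs_of_nonpos hb, neg_neg]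
  rw [hcong]
  have : ∀ t : ℝ, HasDerivAt (fun t => Real.exp t * (t / (2 * μ) + (1 / 2 - 1 / (2 * μ))))
      (Real.exp t * (t / (2 * μ) + 1 / 2)) t := by
    intro t
    have h := ((Real.hasDerivAt_exp t).mul
      (((hasDerivAt_id t).div_const (2 * μ)).add_const (1 / 2 - 1 / (2 * μ))))
    simp only [id] at h
    exact h.congr_deriv (by ring)
  rw [intervalIntegral.integral_eq_sub_of_hasDerivAt (fun t _ => this t)
    (by apply Continuous.intervalIntegrable; continuity)]
  field_simp
  simp only [Real.exp_zero]
  ring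

lemma int2 (μ : ℝ) (hμ : 0 < μ) (x : ℝ) (h1 : 0 ≤ x) (h2 : x < μ) :
    ∫ t in (0 : ℝ)..x, g μ t =
      (-(Real.exp (-x) * (x / (2 * μ) + (1 / 2 + 1 / (2 * μ)))))
        - (-(Real.exp (0 : ℝ) * ((0 : ℝ) / (2 * μ) + (1 / 2 + 1 / (2 * μ))))) := by
  have hcong : ∫ t in (0 : ℝ)..x, g μ t
      = ∫ t in (0 : ℝ)..x, Real.exp (-t) * (t / (2 * μ) + 1 / 2) := by
    apply intervalIntegral.integral_congr
    intro t ht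
    rw [Set.uIcc_of_le h1] at ht
    obtain ⟨ha, hb⟩ := ht
    simp only [g]
    rw [if_neg (by linarith), if_pos (by linarith), abs_of_nonneg ha]
  rw [hcong]
  have : ∀ t : ℝ, HasDerivAt (fun t => -(Real.exp (-t) * (t / (2 * μ) + (1 / 2 + 1 / (2 * μ)))))
      (Real.exp (-t) * (t / (2 * μ) + 1 / 2)) t := by
    intro t
    have h := (((hasDerivAt_id t).neg.exp.mul
      (((hasDerivAt_id t).div_const (2 * μ)).add_const (1 / 2 + 1 / (2 * μ))))).neg
    simp only [id] at h
    exact h.congr_deriv (by simp only [Pi.neg_apply, id]; ring)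
  rw [intervalIntegral.integral_eq_sub_of_hasDerivAt (fun t _ => this t)
    (by apply Continuous.intervalIntegrable; continuity)]
  norm_num

lemma gInt1 (μ : ℝ) (hμ : 0 < μ) : IntervalIntegrable (g μ) volume (-μ) 0 := by
  apply IntervalIntegrable.congr_ae (f := fun t => Real.exp t * (t / (2 * μ) + 1 / 2))
  · apply Continuous.intervalIntegrable; continuity
  · apply (MeasureTheory.ae_restrict_iff' measurableSet_uIoc).2
    filter_upwards with t ht
    rw [Set.uIoc_of_le (by linarith)] at ht
    obtain ⟨ha, hb⟩ := ht
    simp only [g]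
    rw [if_neg (by linarith), if_pos (by linarith), abs_of_nonpos hb, neg_neg]

lemma gInt2 (μ : ℝ) (hμ : 0 < μ) (x : ℝ) (h1 : 0 ≤ x) (h2 : x < μ) :
    IntervalIntegrable (g μ) volume 0 x := by
  apply IntervalIntegrable.congr_ae (f := fun t => Real.exp (-t) * (t / (2 * μ) + 1 / 2))
  · apply Continuous.intervalIntegrable; continuity
  · apply (MeasureTheory.ae_restrict_iff' measurableSet_uIoc).2
    filter_upwards with t ht
    rw [Set.uIoc_of_le h1] at ht
    obtain ⟨ha, hb⟩ := ht
    simp only [g]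
    rw [if_neg (by linarith), if_pos (by linarith), abs_of_nonneg ha.le]

lemma Gval (μ : ℝ) (hμ : 0 < μ) (x : ℝ) (h1 : 0 ≤ x) (h2 : x < μ) :
    G μ x = 1 + Real.exp (-μ) / (2 * μ) - Real.exp (-x) * (x + 1) / (2 * μ)
      - Real.exp (-x) / 2 := by
  have hiv : G μ x = ∫ t in (-μ)..x, g μ t := by
    unfold G
    rw [intervalIntegral.integral_of_le (by linarith : -μ ≤ x)]
    rw [setIntegral_congr_fun measurableSet_Iic
      (g := (Set.Ioc (-μ) x).indicator (g μ))]
    · rw [setIntegral_indicator measurableSet_Ioc]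
      have hset : Set.Iic x ∩ Set.Ioc (-μ) x = Set.Ioc (-μ) x :=
        Set.inter_eq_self_of_subset_right (fun t ht => ht.2)
      rw [hset]
    · intro t ht
      by_cases hmem : t ∈ Set.Ioc (-μ) x
      · rw [Set.indicator_of_mem hmem]
      · rw [Set.indicator_of_notMem hmem]
        simp only [Set.mem_Ioc, not_and, not_le] at hmem
        simp only [Set.mem_Iic] at ht
        have htμ : t ≤ -μ := by
          by_contra hc
          exact absurd ht (not_le.2 (hmem (by linarith)))
        simp only [g]
        rcases lt_or_eq_of_le htμ with hlt | heq
        · rw [if_pos hlt]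
        · rw [if_neg (by rw [heq]; exact lt_irrefl _),
            if_pos (by rw [heq]; linarith)]
          rw [heq]
          have : -μ / (2 * μ) + 1 / 2 = 0 := by field_simp; ring
          rw [this, mul_zero]
  rw [hiv, ← intervalIntegral.integral_add_adjacent_intervals
    (gInt1 μ hμ) (gInt2 μ hμ x h1 h2), int1 μ hμ, int2 μ hμ x h1 h2]
  norm_num
  field_simp
  ring

theorem sslud_hazard_mid (μ : ℝ) (hμ : 0 < μ) (x : ℝ) (h1 : 0 ≤ x) (h2 : x < μ) :
    g μ x / (1 - G μ x) = (1 + (1 - Real.exp (x - μ)) / (x + μ))⁻¹ := by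
  have hgx : g μ x = Real.exp (-x) * (x + μ) / (2 * μ) := by
    simp only [g]
    rw [if_neg (by linarith), if_pos h2, abs_of_nonneg h1]
    field_simp
  have hG := Gval μ hμ x h1 h2
  have hE : Real.exp (x - μ) < 1 := by
    rw [Real.exp_lt_one_iff]; linarith
  have hEeq : Real.exp (-μ) = Real.exp (-x) * Real.exp (x - μ) := by
    rw [← Real.exp_add]; ring_nf
  have hxμ : (0 : ℝ) < x + μ := by linarith
  have h1G : 1 - G μ x = Real.exp (-x) * (x + 1 + μ - Real.exp (x - μ)) / (2 * μ) := by
    rw [hG, hEeq]; field_simp; ring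
  have hpos : 0 < x + 1 + μ - Real.exp (x - μ) := by linarith
  have hrhs : 1 + (1 - Real.exp (x - μ)) / (x + μ) = (x + 1 + μ - Real.exp (x - μ)) / (x + μ) := by
    field_simp
    ring
  rw [hgx, h1G, hrhs, inv_div]
  rw [div_div_div_cancel_right₀]
  · exact mul_div_mul_left _ _ (Real.exp_ne_zero _)
  · positivity
end

section
/- For every μ > 0 and every real a with -μ ≤ a < 0, the mean deviation of SSLUD(μ) about a satisfies ∫_{ℝ} |x - a| · g(x) dx = (a/μ) e^{-μ} + (a/μ - 2/μ + 1) e^{a} + (2/μ - a). -/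
open MeasureTheory Real

lemma hasDerivAt_quad_exp (p b c x : ℝ) :
    HasDerivAt (fun x => (p * x ^ 2 + b * x + c) * Real.exp x)
      ((p * x ^ 2 + (b + 2 * p) * x + (b + c)) * Real.exp x) x := by
  have h1 : HasDerivAt (fun x : ℝ => p * x ^ 2 + b * x + c) (2 * p * x + b) x := by
    have := (((hasDerivAt_pow 2 x).const_mul p).add ((hasDerivAt_id x).const_mul b)).add_const c
    exact this.congr_deriv (by simp; ring)
  have := h1.mul (Real.hasDerivAt_exp x)
  exact this.congr_deriv (by ring)

lemma hasDerivAt_quad_exp_neg (p b c x : ℝ) :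
    HasDerivAt (fun x => (p * x ^ 2 + b * x + c) * Real.exp (-x))
      ((-p * x ^ 2 + (2 * p - b) * x + (b - c)) * Real.exp (-x)) x := by
  have h1 : HasDerivAt (fun x : ℝ => p * x ^ 2 + b * x + c) (2 * p * x + b) x := by
    have := (((hasDerivAt_pow 2 x).const_mul p).add ((hasDerivAt_id x).const_mul b)).add_const c
    exact this.congr_deriv (by simp; ring)
  have he : HasDerivAt (fun x : ℝ => Real.exp (-x)) (-Real.exp (-x)) x := by
    simpa [Function.comp_def] using (Real.hasDerivAt_exp (-x)).comp x (hasDerivAt_neg x)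
  have := h1.mul he
  exact this.congr_deriv (by ring)

lemma integral_quad_exp (p q r l u : ℝ) :
    ∫ x in l..u, (p * x ^ 2 + q * x + r) * Real.exp x =
      (p * u ^ 2 + (q - 2 * p) * u + (r - q + 2 * p)) * Real.exp u
        - (p * l ^ 2 + (q - 2 * p) * l + (r - q + 2 * p)) * Real.exp l := by
  apply intervalIntegral.integral_eq_sub_of_hasDerivAt
  · intro x _
    have h := hasDerivAt_quad_exp p (q - 2 * p) (r - q + 2 * p) x
    have he : (p * x ^ 2 + ((q - 2 * p) + 2 * p) * x + ((q - 2 * p) + (r - q + 2 * p)))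
        * Real.exp x = (p * x ^ 2 + q * x + r) * Real.exp x := by ring
    rw [he] at h
    exact h
  · exact (by fun_prop : Continuous fun x => (p * x ^ 2 + q * x + r) * Real.exp x).intervalIntegrable _ _

lemma integral_quad_exp_neg (p q r l u : ℝ) :
    ∫ x in l..u, (p * x ^ 2 + q * x + r) * Real.exp (-x) =
      (-(p * u ^ 2 + (q + 2 * p) * u + (r + q + 2 * p))) * Real.exp (-u)
        - (-(p * l ^ 2 + (q + 2 * p) * l + (r + q + 2 * p))) * Real.exp (-l) := by
  apply intervalIntegral.integral_eq_sub_of_hasDerivAt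
  · intro x _
    have h := hasDerivAt_quad_exp_neg (-p) (-(q + 2 * p)) (-(r + q + 2 * p)) x
    have he : (-(-p) * x ^ 2 + (2 * (-p) - (-(q + 2 * p))) * x + ((-(q + 2 * p)) - (-(r + q + 2 * p))))
        * Real.exp (-x) = (p * x ^ 2 + q * x + r) * Real.exp (-x) := by ring
    rw [he] at h
    have hf : (fun x => ((-p) * x ^ 2 + (-(q + 2 * p)) * x + (-(r + q + 2 * p))) * Real.exp (-x))
        = fun x => (-(p * x ^ 2 + (q + 2 * p) * x + (r + q + 2 * p))) * Real.exp (-x) := by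
      funext x; ring
    rw [hf] at h
    exact h
  · exact (by fun_prop : Continuous fun x => (p * x ^ 2 + q * x + r) * Real.exp (-x)).intervalIntegrable _ _

set_option maxHeartbeats 1600000

theorem sslud_mean_deviation_neg (μ : ℝ) (hμ : 0 < μ) (a : ℝ) (h1 : -μ ≤ a) (h2 : a < 0) :
    (∫ x : ℝ, |x - a| * g μ x) =
      (a / μ) * Real.exp (-μ) + (a / μ - 2 / μ + 1) * Real.exp a + (2 / μ - a) := by
  have hμ' : μ ≠ 0 := ne_of_gt hμ
  set f : ℝ → ℝ := fun x => |x - a| * g μ x with hf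
  -- g on the three regions
  have hg1 : ∀ x ≤ -μ, g μ x = 0 := by
    intro x hx
    rcases lt_or_eq_of_le hx with h | h
    · simp [g, h]
    · subst h
      have : ¬ (-μ < -μ) := lt_irrefl _
      have h2' : (-μ : ℝ) < μ := by linarith
      simp only [g, this, if_false, h2', if_true]
      have : -μ / (2 * μ) + 1 / 2 = 0 := by field_simp; ring
      rw [this, mul_zero]
  have hg2 : ∀ x ∈ Set.Ioc (-μ) μ, g μ x = Real.exp (-|x|) * (x / (2 * μ) + 1 / 2) := by
    intro x hx
    rcases lt_or_ge x μ with h | h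
    · simp [g, not_lt.2 hx.1.le, h]
    · have hx2 : x = μ := le_antisymm hx.2 h
      rw [hx2]
      have hn1 : ¬ (μ < -μ) := by linarith
      have hn2 : ¬ (μ < μ) := lt_irrefl _
      simp only [g, hn1, if_false, hn2]
      rw [abs_of_pos hμ]
      have : μ / (2 * μ) + 1 / 2 = 1 := by field_simp; ring
      rw [this, mul_one]
  have hg3 : ∀ x ∈ Set.Ioi μ, g μ x = Real.exp (-x) := by
    intro x hx
    have hn1 : ¬ (x < -μ) := by simp at hx ⊢; linarith [hx]
    have hn2 : ¬ (x < μ) := not_lt.2 (le_of_lt hx)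
    simp [g, hn1, hn2]
  -- continuous middle-formula function
  set h : ℝ → ℝ := fun x => |x - a| * (Real.exp (-|x|) * (x / (2 * μ) + 1 / 2)) with hh
  have hcont : Continuous h := by
    apply Continuous.mul
    · exact continuous_abs.comp (continuous_id.sub continuous_const)
    · exact (Real.continuous_exp.comp continuous_abs.neg).mul
        ((continuous_id.div_const _).add continuous_const)
  -- tail function
  set F : ℝ → ℝ := fun x => -((x - a + 1) * Real.exp (-x)) with hF
  have hFderiv : ∀ x ∈ Set.Ici μ, HasDerivAt F ((x - a) * Real.exp (-x)) x := by
    intro x _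
    have he : HasDerivAt (fun x : ℝ => Real.exp (-x)) (-Real.exp (-x)) x := by
      simpa [Function.comp_def] using (Real.hasDerivAt_exp (-x)).comp x (hasDerivAt_neg x)
    have hl : HasDerivAt (fun x : ℝ => x - a + 1) 1 x := by
      simpa using ((hasDerivAt_id x).sub_const a).add_const 1
    have := (hl.mul he).neg
    exact this.congr_deriv (by ring)
  have hFpos : ∀ x ∈ Set.Ioi μ, 0 ≤ (x - a) * Real.exp (-x) := by
    intro x hx
    have : (0:ℝ) < x - a := by simp at hx; linarith
    positivity
  have hFtendsto : Filter.Tendsto F Filter.atTop (nhds 0) := by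
    have ha1 : Filter.Tendsto (fun x : ℝ => x * Real.exp (-x)) Filter.atTop (nhds 0) := by
      simpa using Real.tendsto_pow_mul_exp_neg_atTop_nhds_zero 1
    have ha2 : Filter.Tendsto (fun x : ℝ => (1 - a) * Real.exp (-x)) Filter.atTop (nhds 0) := by
      simpa using (Real.tendsto_exp_neg_atTop_nhds_zero.const_mul (1 - a))
    have := (ha1.add ha2).neg
    simp only [add_zero, neg_zero] at this
    convert this using 2 with x
    simp [hF]; ring
  have htail_int : IntegrableOn (fun x => (x - a) * Real.exp (-x)) (Set.Ioi μ) :=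
    integrableOn_Ioi_deriv_of_nonneg' hFderiv hFpos hFtendsto
  have htail_val : ∫ x in Set.Ioi μ, (x - a) * Real.exp (-x) = (μ - a + 1) * Real.exp (-μ) := by
    rw [integral_Ioi_of_hasDerivAt_of_nonneg' hFderiv hFpos hFtendsto]
    simp [hF]
  -- f equals tail integrand on Ioi μ
  have heq3 : Set.EqOn (fun x => (x - a) * Real.exp (-x)) f (Set.Ioi μ) := by
    intro x hx
    have hx' : μ < x := hx
    simp only [hf]
    rw [hg3 x hx, abs_of_pos (by linarith)]
  have hint3 : IntegrableOn f (Set.Ioi μ) :=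
    htail_int.congr_fun heq3 measurableSet_Ioi
  -- f equals 0 on Iic (-μ)
  have heq1 : Set.EqOn f (fun _ => (0:ℝ)) (Set.Iic (-μ)) := by
    intro x hx
    simp only [hf]
    rw [hg1 x hx, mul_zero]
  have hint1 : IntegrableOn f (Set.Iic (-μ)) :=
    integrableOn_zero.congr_fun (fun x hx => (heq1 hx).symm) measurableSet_Iic
  -- f equals h on Ioc (-μ) μ
  have heq2 : Set.EqOn h f (Set.Ioc (-μ) μ) := by
    intro x hx
    simp only [hf, hh]
    rw [hg2 x hx]
  have hint2 : IntegrableOn f (Set.Ioc (-μ) μ) :=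
    (hcont.integrableOn_Ioc).congr_fun heq2 measurableSet_Ioc
  -- split the full integral
  have hIic : IntegrableOn f (Set.Iic μ) := by
    rw [← Set.Iic_union_Ioc_eq_Iic (by linarith : -μ ≤ μ)]
    exact hint1.union hint2
  have hsplit1 : (∫ x : ℝ, f x) = (∫ x in Set.Iic μ, f x) + ∫ x in Set.Ioi μ, f x :=
    (intervalIntegral.integral_Iic_add_Ioi hIic hint3).symm
  have hsplit2 : (∫ x in Set.Iic μ, f x)
      = (∫ x in Set.Iic (-μ), f x) + ∫ x in Set.Ioc (-μ) μ, f x := by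
    rw [← Set.Iic_union_Ioc_eq_Iic (by linarith : -μ ≤ μ)]
    exact setIntegral_union (Set.Iic_disjoint_Ioc le_rfl) measurableSet_Ioc hint1 hint2
  have hzero : (∫ x in Set.Iic (-μ), f x) = 0 := by
    rw [setIntegral_congr_fun measurableSet_Iic heq1]
    simp
  have hmid : (∫ x in Set.Ioc (-μ) μ, f x) = ∫ x in Set.Ioc (-μ) μ, h x :=
    (setIntegral_congr_fun measurableSet_Ioc heq2).symm
  have htailf : (∫ x in Set.Ioi μ, f x) = (μ - a + 1) * Real.exp (-μ) := by
    rw [setIntegral_congr_fun measurableSet_Ioi (fun x hx => (heq3 hx).symm)]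
    exact htail_val
  -- middle as interval integral, split into three pieces
  have hmid2 : (∫ x in Set.Ioc (-μ) μ, h x) = ∫ x in (-μ)..μ, h x :=
    (intervalIntegral.integral_of_le (by linarith)).symm
  have hii : ∀ l u : ℝ, IntervalIntegrable h volume l u := fun l u => hcont.intervalIntegrable l u
  have hsplitA : (∫ x in (-μ)..μ, h x)
      = (∫ x in (-μ)..a, h x) + (∫ x in a..(0:ℝ), h x) + ∫ x in (0:ℝ)..μ, h x := by
    rw [intervalIntegral.integral_add_adjacent_intervals (hii (-μ) a) (hii a 0),
        intervalIntegral.integral_add_adjacent_intervals (hii (-μ) 0) (hii 0 μ)]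
  -- piece A : [-μ, a]
  have hA : (∫ x in (-μ)..a, h x)
      = ∫ x in (-μ)..a, ((-(1/(2*μ))) * x ^ 2 + (a/(2*μ) - 1/2) * x + a/2) * Real.exp x := by
    apply intervalIntegral.integral_congr
    intro x hx
    rw [Set.uIcc_of_le (by linarith)] at hx
    obtain ⟨hx1, hx2⟩ := hx
    simp only [hh]
    rw [abs_of_nonpos (by linarith : x - a ≤ 0), abs_of_nonpos (by linarith : x ≤ 0), neg_neg]
    field_simp
    ring
  have hB : (∫ x in a..(0:ℝ), h x)
      = ∫ x in a..(0:ℝ), ((1/(2*μ)) * x ^ 2 + (1/2 - a/(2*μ)) * x + (-(a/2))) * Real.exp x := by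
    apply intervalIntegral.integral_congr
    intro x hx
    rw [Set.uIcc_of_le (by linarith)] at hx
    obtain ⟨hx1, hx2⟩ := hx
    simp only [hh]
    rw [abs_of_nonneg (by linarith : 0 ≤ x - a), abs_of_nonpos (by linarith : x ≤ 0), neg_neg]
    field_simp
    ring
  have hC : (∫ x in (0:ℝ)..μ, h x)
      = ∫ x in (0:ℝ)..μ, ((1/(2*μ)) * x ^ 2 + (1/2 - a/(2*μ)) * x + (-(a/2))) * Real.exp (-x) := by
    apply intervalIntegral.integral_congr
    intro x hx
    rw [Set.uIcc_of_le (by linarith)] at hx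
    obtain ⟨hx1, hx2⟩ := hx
    simp only [hh]
    rw [abs_of_nonneg (by linarith : 0 ≤ x - a), abs_of_nonneg (by linarith : (0:ℝ) ≤ x)]
    field_simp
    ring
  rw [hsplit1, hsplit2, hzero, hmid, hmid2, hsplitA, hA, hB, hC, htailf,
      integral_quad_exp, integral_quad_exp, integral_quad_exp_neg]
  simp only [neg_neg, Real.exp_zero, neg_zero]
  field_simp
  ring
end

section
/- For every μ > 0 and every real a with a ≥ μ, the mean deviation of SSLUD(μ) about a satisfies ∫_{ℝ} |x - a| · g(x) dx = (1 + 2/μ) e^{-μ} + 2 e^{-a} + (a - 2/μ). -/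
open MeasureTheory Real

theorem sslud_mean_deviation_tail (μ : ℝ) (hμ : 0 < μ) (a : ℝ) (h : μ ≤ a) :
    (∫ x : ℝ, |x - a| * g μ x) =
      (1 + 2 / μ) * Real.exp (-μ) + 2 * Real.exp (-a) + (a - 2 / μ) := by
  have hμ' : μ ≠ 0 := ne_of_gt hμ
  have ha : (0:ℝ) < a := lt_of_lt_of_le hμ h
  -- piecewise forms
  set f1 : ℝ → ℝ := fun x => (a - x) * (Real.exp x * (x / (2*μ) + 1/2)) with hf1def
  set f2 : ℝ → ℝ := fun x => (a - x) * (Real.exp (-x) * (x / (2*μ) + 1/2)) with hf2def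
  set f3 : ℝ → ℝ := fun x => (a - x) * Real.exp (-x) with hf3def
  set f4 : ℝ → ℝ := fun x => (x - a) * Real.exp (-x) with hf4def
  -- antiderivatives
  set F1 : ℝ → ℝ := fun t => Real.exp t * ((a*t - t^2 - a + 2*t - 2)/(2*μ) + (a - t + 1)/2)
    with hF1def
  set F2 : ℝ → ℝ := fun t => -(Real.exp (-t) * ((a*t - t^2 + a - 2*t - 2)/(2*μ) + (a - t - 1)/2))
    with hF2def
  set F3 : ℝ → ℝ := fun t => (t - a + 1) * Real.exp (-t) with hF3def
  set F4 : ℝ → ℝ := fun t => -((t - a + 1) * Real.exp (-t)) with hF4def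
  -- derivative facts
  have hexpneg : ∀ x : ℝ, HasDerivAt (fun t : ℝ => Real.exp (-t)) (-Real.exp (-x)) x := by
    intro x
    simpa using ((hasDerivAt_id x).neg.exp)
  have hF1 : ∀ x : ℝ, HasDerivAt F1 (f1 x) x := by
    intro x
    have hp1 : HasDerivAt (fun t : ℝ => a*t - t^2 - a + 2*t - 2) (a - 2*x + 2) x := by
      have h1 := (((((hasDerivAt_id x).const_mul a).sub (hasDerivAt_pow 2 x)).sub_const a).add
        ((hasDerivAt_id x).const_mul 2)).sub_const 2
      refine h1.congr_deriv ?_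
      push_cast; ring
    have hp2 : HasDerivAt (fun t : ℝ => a - t + 1) (-1 : ℝ) x := by
      simpa using (((hasDerivAt_const x a).sub (hasDerivAt_id x)).add_const 1)
    have hq := (hp1.div_const (2*μ)).add (hp2.div_const 2)
    have hd := (Real.hasDerivAt_exp x).mul hq
    rw [hF1def, hf1def]
    refine hd.congr_deriv ?_
    simp only [Pi.add_apply]
    field_simp
    ring
  have hF2 : ∀ x : ℝ, HasDerivAt F2 (f2 x) x := by
    intro x
    have hp1 : HasDerivAt (fun t : ℝ => a*t - t^2 + a - 2*t - 2) (a - 2*x - 2) x := by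
      have h1 := (((((hasDerivAt_id x).const_mul a).sub (hasDerivAt_pow 2 x)).add_const a).sub
        ((hasDerivAt_id x).const_mul 2)).sub_const 2
      refine h1.congr_deriv ?_
      push_cast; ring
    have hp2 : HasDerivAt (fun t : ℝ => a - t - 1) (-1 : ℝ) x := by
      simpa using (((hasDerivAt_const x a).sub (hasDerivAt_id x)).sub_const 1)
    have hq := (hp1.div_const (2*μ)).add (hp2.div_const 2)
    have hd := ((hexpneg x).mul hq).neg
    rw [hF2def, hf2def]
    refine hd.congr_deriv ?_
    simp only [Pi.add_apply]
    field_simp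
    ring
  have hF3 : ∀ x : ℝ, HasDerivAt F3 (f3 x) x := by
    intro x
    have hd := (((hasDerivAt_id x).sub_const a).add_const 1).mul (hexpneg x)
    rw [hF3def, hf3def]
    refine hd.congr_deriv ?_
    simp only [id_eq]
    ring
  have hF4 : ∀ x : ℝ, HasDerivAt F4 (f4 x) x := by
    intro x
    have hd := (hF3 x).neg
    rw [hF4def]
    refine hd.congr_deriv ?_
    rw [hf4def, hf3def]
    ring
  -- continuity of pieces
  have hc1 : Continuous f1 := by
    rw [hf1def]; fun_prop
  have hc2 : Continuous f2 := by
    rw [hf2def]; fun_prop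
  have hc3 : Continuous f3 := by
    rw [hf3def]; fun_prop
  -- pointwise identification with f on each region
  have heq1 : ∀ x ∈ Set.Ioc (-μ) 0, |x - a| * g μ x = f1 x := by
    intro x hx
    obtain ⟨hx1, hx2⟩ := hx
    have h1 : ¬ x < -μ := by linarith
    have h2 : x < μ := by linarith
    rw [show |x - a| = a - x by rw [abs_of_nonpos (by linarith)]; ring]
    rw [show g μ x = Real.exp x * (x / (2*μ) + 1/2) by
      simp only [g, if_neg h1, if_pos h2, abs_of_nonpos hx2, neg_neg]]
  have heq2 : ∀ x ∈ Set.Ioc 0 μ, |x - a| * g μ x = f2 x := by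
    intro x hx
    obtain ⟨hx1, hx2⟩ := hx
    have h1 : ¬ x < -μ := by linarith
    have habs : |x - a| = a - x := by rw [abs_of_nonpos (by linarith)]; ring
    rcases lt_or_eq_of_le hx2 with hlt | heq
    · rw [habs, show g μ x = Real.exp (-x) * (x / (2*μ) + 1/2) by
        simp only [g, if_neg h1, if_pos hlt, abs_of_nonneg hx1.le]]
    · subst heq
      rw [habs]
      simp only [g, if_neg h1, if_neg (lt_irrefl x)]
      rw [hf2def]
      have : x / (2*x) + 1/2 = 1 := by
        field_simp
        ring
      simp only [this, mul_one]
  have heq3 : ∀ x ∈ Set.Ioc μ a, |x - a| * g μ x = f3 x := by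
    intro x hx
    obtain ⟨hx1, hx2⟩ := hx
    have h1 : ¬ x < -μ := by linarith
    have h2 : ¬ x < μ := by linarith
    rw [show |x - a| = a - x by rw [abs_of_nonpos (by linarith)]; ring]
    rw [show g μ x = Real.exp (-x) by simp only [g, if_neg h1, if_neg h2]]
  have heq4 : ∀ x ∈ Set.Ioi a, |x - a| * g μ x = f4 x := by
    intro x hx
    have hx1 : a < x := hx
    have h1 : ¬ x < -μ := by linarith
    have h2 : ¬ x < μ := by linarith
    rw [show |x - a| = x - a by rw [abs_of_nonneg (by linarith)]]
    rw [show g μ x = Real.exp (-x) by simp only [g, if_neg h1, if_neg h2]]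
  -- tail integral
  have htend : Filter.Tendsto F4 Filter.atTop (nhds 0) := by
    have h1 : Filter.Tendsto (fun t : ℝ => t * Real.exp (-t)) Filter.atTop (nhds 0) := by
      simpa using Real.tendsto_pow_mul_exp_neg_atTop_nhds_zero 1
    have h2 := Real.tendsto_exp_neg_atTop_nhds_zero
    have h4 : Filter.Tendsto (fun t : ℝ => -(t * Real.exp (-t) + (1 - a) * Real.exp (-t)))
        Filter.atTop (nhds 0) := by
      simpa using (h1.add (h2.const_mul (1 - a))).neg
    refine h4.congr (fun t => ?_)
    rw [hF4def]; ring
  have hf4pos : ∀ x ∈ Set.Ioi a, 0 ≤ f4 x := by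
    intro x hx
    have : a < x := hx
    exact mul_nonneg (by linarith) (Real.exp_pos _).le
  have hP4 : ∫ x in Set.Ioi a, f4 x = Real.exp (-a) := by
    have := integral_Ioi_of_hasDerivAt_of_nonneg' (fun x _ => hF4 x) hf4pos htend
    rw [this, hF4def]
    ring
  have hI4 : IntegrableOn f4 (Set.Ioi a) :=
    integrableOn_Ioi_deriv_of_nonneg' (fun x _ => hF4 x) hf4pos htend
  -- integrability of f on pieces
  have hIf4 : IntegrableOn (fun x => |x - a| * g μ x) (Set.Ioi a) :=
    hI4.congr_fun (fun x hx => (heq4 x hx).symm) measurableSet_Ioi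
  have hIf3 : IntegrableOn (fun x => |x - a| * g μ x) (Set.Ioc μ a) :=
    (hc3.integrableOn_Ioc).congr_fun (fun x hx => (heq3 x hx).symm) measurableSet_Ioc
  have hIf2 : IntegrableOn (fun x => |x - a| * g μ x) (Set.Ioc 0 μ) :=
    (hc2.integrableOn_Ioc).congr_fun (fun x hx => (heq2 x hx).symm) measurableSet_Ioc
  have hIf1 : IntegrableOn (fun x => |x - a| * g μ x) (Set.Ioc (-μ) 0) :=
    (hc1.integrableOn_Ioc).congr_fun (fun x hx => (heq1 x hx).symm) measurableSet_Ioc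
  -- whole line reduces to Ioi (-μ)
  have hstep0 : (∫ x : ℝ, |x - a| * g μ x) = ∫ x in Set.Ioi (-μ), |x - a| * g μ x := by
    refine (setIntegral_eq_integral_of_forall_compl_eq_zero ?_).symm
    intro x hx
    simp only [Set.mem_Ioi, not_lt] at hx
    rcases lt_or_eq_of_le hx with hlt | heq
    · simp [g, hlt]
    · rw [show g μ x = 0 by
        have h1 : ¬ x < -μ := by rw [heq]; exact lt_irrefl _
        have h2 : x < μ := by rw [heq]; linarith
        simp only [g, if_neg h1, if_pos h2]
        have : x / (2*μ) + 1/2 = 0 := by rw [heq]; field_simp; ring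
        rw [this, mul_zero]]
      rw [mul_zero]
  -- splitting
  have hsplit3 : ∫ x in Set.Ioi μ, |x - a| * g μ x =
      (∫ x in Set.Ioc μ a, |x - a| * g μ x) + ∫ x in Set.Ioi a, |x - a| * g μ x := by
    rw [← Set.Ioc_union_Ioi_eq_Ioi h,
      setIntegral_union (Set.Ioc_disjoint_Ioi le_rfl) measurableSet_Ioi hIf3 hIf4]
  have hsplit2 : ∫ x in Set.Ioi (0:ℝ), |x - a| * g μ x =
      (∫ x in Set.Ioc (0:ℝ) μ, |x - a| * g μ x) + ∫ x in Set.Ioi μ, |x - a| * g μ x := by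
    rw [← Set.Ioc_union_Ioi_eq_Ioi hμ.le,
      setIntegral_union (Set.Ioc_disjoint_Ioi le_rfl) measurableSet_Ioi hIf2
        (hIf3.union hIf4 |>.congr_set_ae (by rw [Set.Ioc_union_Ioi_eq_Ioi h]; exact Filter.EventuallyEq.rfl))]
  have hsplit1 : ∫ x in Set.Ioi (-μ), |x - a| * g μ x =
      (∫ x in Set.Ioc (-μ) 0, |x - a| * g μ x) + ∫ x in Set.Ioi (0:ℝ), |x - a| * g μ x := by
    rw [← Set.Ioc_union_Ioi_eq_Ioi (by linarith : -μ ≤ (0:ℝ)),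
      setIntegral_union (Set.Ioc_disjoint_Ioi le_rfl) measurableSet_Ioi hIf1
        ((hIf2.union (hIf3.union hIf4 |>.congr_set_ae
          (by rw [Set.Ioc_union_Ioi_eq_Ioi h]; exact Filter.EventuallyEq.rfl))).congr_set_ae
          (by rw [Set.Ioc_union_Ioi_eq_Ioi hμ.le]; exact Filter.EventuallyEq.rfl))]
  -- evaluate bounded pieces
  have hP1 : ∫ x in Set.Ioc (-μ) 0, |x - a| * g μ x = F1 0 - F1 (-μ) := by
    rw [setIntegral_congr_fun measurableSet_Ioc heq1,
      ← intervalIntegral.integral_of_le (by linarith : -μ ≤ (0:ℝ))]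
    exact intervalIntegral.integral_eq_sub_of_hasDerivAt (fun x _ => hF1 x)
      (hc1.intervalIntegrable _ _)
  have hP2 : ∫ x in Set.Ioc (0:ℝ) μ, |x - a| * g μ x = F2 μ - F2 0 := by
    rw [setIntegral_congr_fun measurableSet_Ioc heq2,
      ← intervalIntegral.integral_of_le hμ.le]
    exact intervalIntegral.integral_eq_sub_of_hasDerivAt (fun x _ => hF2 x)
      (hc2.intervalIntegrable _ _)
  have hP3 : ∫ x in Set.Ioc μ a, |x - a| * g μ x = F3 a - F3 μ := by
    rw [setIntegral_congr_fun measurableSet_Ioc heq3,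
      ← intervalIntegral.integral_of_le h]
    exact intervalIntegral.integral_eq_sub_of_hasDerivAt (fun x _ => hF3 x)
      (hc3.intervalIntegrable _ _)
  have hP4' : ∫ x in Set.Ioi a, |x - a| * g μ x = Real.exp (-a) := by
    rw [setIntegral_congr_fun measurableSet_Ioi heq4, hP4]
  -- combine
  rw [hstep0, hsplit1, hsplit2, hsplit3, hP1, hP2, hP3, hP4', hF1def, hF2def, hF3def]
  simp only [Real.exp_zero, neg_zero, neg_neg]
  field_simp
  ring
end
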